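/- arXiv:math/0407128 — 9 statements merged into one kernel-verified Lean document; each statement's English description precedes it below -/
import Mathlib

section
/- Let $p_B\in(0,1]$, $C>0$, $0<\alpha\le1$, and $\gamma_n := (C/(n+C))^\alpha$ for $n\ge1$. If $0<\alpha<1$, or if $\alpha=1$ and $C>1/p_B$, then $\sum_{n\ge0}\prod_{k=1}^n(1-p_B\gamma_k) < +\infty$. -/
open Finset

private lemma summable_of_eventually_le' {f g : ℕ → ℝ} (hf : ∀ n, 0 ≤ f n)
    (hg : Summable g) (h : ∀ᶠ n in Filter.atTop, f n ≤ g n) : Summable f := by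
  obtain ⟨N, hN⟩ := Filter.eventually_atTop.mp h
  rw [← summable_nat_add_iff N]
  exact Summable.of_nonneg_of_le (fun n => hf _) (fun n => hN _ (by omega))
    ((summable_nat_add_iff N).mpr hg)

theorem stmt1 (pB C α : ℝ) (hpB : pB ∈ Set.Ioc (0:ℝ) 1) (hC : 0 < C)
    (hα : α ∈ Set.Ioc (0:ℝ) 1) (γ : ℕ → ℝ)
    (hγ : ∀ n ≥ 1, γ n = (C / (n + C)) ^ α)
    (hcase : α < 1 ∨ (α = 1 ∧ C > 1 / pB)) :
    Summable (fun n : ℕ => ∏ k ∈ Finset.Icc 1 n, (1 - pB * γ k)) := by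
  obtain ⟨hpB0, hpB1⟩ := hpB
  obtain ⟨hα0, hα1⟩ := hα
  have hkC : ∀ k : ℕ, (0:ℝ) < (k:ℝ) + C := fun k => by positivity
  have hbase0 : ∀ k : ℕ, (0:ℝ) < C / ((k:ℝ) + C) := fun k => by positivity
  have hbase1 : ∀ k : ℕ, C / ((k:ℝ) + C) ≤ 1 := fun k => by
    rw [div_le_one (hkC k)]
    have : (0:ℝ) ≤ (k:ℝ) := Nat.cast_nonneg k
    linarith
  have hγpos : ∀ k : ℕ, 1 ≤ k → 0 < γ k := fun k hk => by
    rw [hγ k hk]; exact Real.rpow_pos_of_pos (hbase0 k) α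
  have hγle1 : ∀ k : ℕ, 1 ≤ k → γ k ≤ 1 := fun k hk => by
    rw [hγ k hk]; exact Real.rpow_le_one (hbase0 k).le (hbase1 k) hα0.le
  have hfac : ∀ k : ℕ, 1 ≤ k → 0 ≤ 1 - pB * γ k := fun k hk => by
    have := mul_le_one₀ hpB1 (hγpos k hk).le (hγle1 k hk)
    linarith
  have hfnn : ∀ n : ℕ, 0 ≤ ∏ k ∈ Finset.Icc 1 n, (1 - pB * γ k) := fun n =>
    Finset.prod_nonneg fun k hk => hfac k (Finset.mem_Icc.mp hk).1
  -- bound the product by the exponential of minus the sum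
  have hf_le : ∀ n : ℕ, ∏ k ∈ Finset.Icc 1 n, (1 - pB * γ k)
      ≤ Real.exp (-(pB * ∑ k ∈ Finset.Icc 1 n, γ k)) := by
    intro n
    calc ∏ k ∈ Finset.Icc 1 n, (1 - pB * γ k)
        ≤ ∏ k ∈ Finset.Icc 1 n, Real.exp (-(pB * γ k)) := by
          refine Finset.prod_le_prod (fun k hk => hfac k (Finset.mem_Icc.mp hk).1)
            (fun k hk => ?_)
          have := Real.add_one_le_exp (-(pB * γ k))
          linarith
      _ = Real.exp (∑ k ∈ Finset.Icc 1 n, -(pB * γ k)) := (Real.exp_sum _ _).symm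
      _ = Real.exp (-(pB * ∑ k ∈ Finset.Icc 1 n, γ k)) := by
          rw [Finset.sum_neg_distrib, Finset.mul_sum]
  rcases hcase with hαlt | ⟨hα1', hCC⟩
  · -- case α < 1
    set c : ℝ := pB * (C / 2) ^ α with hc_def
    have hc : 0 < c := by positivity
    set q : ℝ := 2 / (1 - α) with hq_def
    have h1α : (0:ℝ) < 1 - α := by linarith
    have T : Filter.Tendsto (fun x : ℝ => x ^ q * Real.exp (-c * x))
        Filter.atTop (nhds 0) :=
      tendsto_rpow_mul_exp_neg_mul_atTop_nhds_zero q c hc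
    have htn : Filter.Tendsto (fun n : ℕ => (n:ℝ) ^ (1 - α)) Filter.atTop Filter.atTop :=
      (tendsto_rpow_atTop h1α).comp tendsto_natCast_atTop_atTop
    have T2 := T.comp htn
    have hev : ∀ᶠ n : ℕ in Filter.atTop,
        ((n:ℝ) ^ (1 - α)) ^ q * Real.exp (-c * (n:ℝ) ^ (1 - α)) < 1 :=
      T2.eventually_lt_const one_pos
    refine summable_of_eventually_le' hfnn
      (Real.summable_nat_rpow.mpr (by norm_num : (-2:ℝ) < -1)) ?_
    filter_upwards [Filter.eventually_ge_atTop 1, Filter.eventually_ge_atTop ⌈C⌉₊, hev]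
      with n hn1 hnC hevn
    have hn0 : (0:ℝ) < (n:ℝ) := by exact_mod_cast hn1
    have hnCr : C ≤ (n:ℝ) := le_trans (Nat.le_ceil C) (by exact_mod_cast hnC)
    -- lower bound on the sum
    have hsum_lb : (n:ℝ) * (C / ((n:ℝ) + C)) ^ α ≤ ∑ k ∈ Finset.Icc 1 n, γ k := by
      have := Finset.card_nsmul_le_sum (Finset.Icc 1 n)
        γ ((C / ((n:ℝ) + C)) ^ α) (fun k hk => by
          obtain ⟨hk1, hkn⟩ := Finset.mem_Icc.mp hk
          rw [hγ k hk1]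
          refine Real.rpow_le_rpow (hbase0 n).le ?_ hα0.le
          refine div_le_div_of_nonneg_left hC.le (hkC k) ?_
          have : (k:ℝ) ≤ (n:ℝ) := by exact_mod_cast hkn
          linarith)
      rwa [Nat.card_Icc, Nat.add_sub_cancel, nsmul_eq_mul] at this
    have hstep : c * (n:ℝ) ^ (1 - α) ≤ pB * ((n:ℝ) * (C / ((n:ℝ) + C)) ^ α) := by
      have h2n : C / (2 * (n:ℝ)) ≤ C / ((n:ℝ) + C) :=
        div_le_div_of_nonneg_left hC.le (hkC n) (by linarith)
      have hr : (C / (2 * (n:ℝ))) ^ α ≤ (C / ((n:ℝ) + C)) ^ α :=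
        Real.rpow_le_rpow (by positivity) h2n hα0.le
      have heq : (C / 2) ^ α * (n:ℝ) ^ (1 - α) = (n:ℝ) * (C / (2 * (n:ℝ))) ^ α := by
        have h1 : C / (2 * (n:ℝ)) = (C / 2) / (n:ℝ) := by ring
        rw [h1, Real.div_rpow (by positivity) hn0.le, Real.rpow_sub hn0,
          Real.rpow_one]
        field_simp
      have : (C / 2) ^ α * (n:ℝ) ^ (1 - α) ≤ (n:ℝ) * (C / ((n:ℝ) + C)) ^ α := by
        rw [heq]
        exact mul_le_mul_of_nonneg_left hr hn0.le
      calc c * (n:ℝ) ^ (1 - α) = pB * ((C / 2) ^ α * (n:ℝ) ^ (1 - α)) := by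
            rw [hc_def]; ring
        _ ≤ pB * ((n:ℝ) * (C / ((n:ℝ) + C)) ^ α) :=
            mul_le_mul_of_nonneg_left this hpB0.le
    have hexp_le : Real.exp (-(pB * ∑ k ∈ Finset.Icc 1 n, γ k))
        ≤ Real.exp (-c * (n:ℝ) ^ (1 - α)) := by
      apply Real.exp_le_exp.mpr
      have := mul_le_mul_of_nonneg_left hsum_lb hpB0.le
      nlinarith [hstep]
    -- from the eventual bound
    have h2q : (1 - α) * q = 2 := by rw [hq_def]; field_simp
    have hpow2 : ((n:ℝ) ^ (1 - α)) ^ q = (n:ℝ) ^ (2:ℝ) := by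
      rw [← Real.rpow_mul hn0.le, h2q]
    rw [hpow2] at hevn
    have hp2 : (0:ℝ) < (n:ℝ) ^ (2:ℝ) := Real.rpow_pos_of_pos hn0 _
    have hlast : Real.exp (-c * (n:ℝ) ^ (1 - α)) ≤ (n:ℝ) ^ (-2:ℝ) := by
      rw [show ((-2:ℝ)) = -(2:ℝ) by norm_num, Real.rpow_neg hn0.le, ← one_div,
        le_div_iff₀ hp2]
      nlinarith [hevn]
    exact le_trans (hf_le n) (le_trans hexp_le hlast)
  · -- case α = 1
    subst hα1'
    have hγ' : ∀ k : ℕ, 1 ≤ k → γ k = C / ((k:ℝ) + C) := fun k hk => by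
      rw [hγ k hk, Real.rpow_one]
    set s : ℝ := pB * C with hs_def
    have hs : 1 < s := by
      have : 1 / pB < C := hCC
      rw [div_lt_iff₀ hpB0] at this
      rw [hs_def]; nlinarith
    -- telescoping log bound
    set F : ℕ → ℝ := fun i => Real.log ((i:ℝ) + 1 + C) with hF_def
    have hterm : ∀ i : ℕ, F (i + 1) - F i ≤ 1 / ((i:ℝ) + 1 + C) := by
      intro i
      have h1 : (0:ℝ) < (i:ℝ) + 1 + C := by positivity
      have h2 : (0:ℝ) < (i:ℝ) + 1 + 1 + C := by positivity
      have hF1 : F (i + 1) = Real.log ((i:ℝ) + 1 + 1 + C) := by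
        simp only [hF_def]; push_cast; ring_nf
      rw [hF1, hF_def, ← Real.log_div h2.ne' h1.ne']
      have hlog := Real.log_le_sub_one_of_pos
        (show (0:ℝ) < ((i:ℝ) + 1 + 1 + C) / ((i:ℝ) + 1 + C) by positivity)
      have heq : ((i:ℝ) + 1 + 1 + C) / ((i:ℝ) + 1 + C) - 1 = 1 / ((i:ℝ) + 1 + C) := by
        field_simp
        ring
      linarith
    have htel : ∀ n : ℕ, Real.log ((n:ℝ) + 1 + C) - Real.log (1 + C)
        ≤ ∑ k ∈ Finset.Icc 1 n, 1 / ((k:ℝ) + C) := by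
      intro n
      have h0 : F n - F 0 = ∑ i ∈ Finset.range n, (F (i + 1) - F i) :=
        (Finset.sum_range_sub F n).symm
      have h1 : ∑ i ∈ Finset.range n, (F (i + 1) - F i)
          ≤ ∑ i ∈ Finset.range n, 1 / ((i:ℝ) + 1 + C) :=
        Finset.sum_le_sum fun i _ => hterm i
      have h2 : ∑ k ∈ Finset.Icc 1 n, 1 / ((k:ℝ) + C)
          = ∑ i ∈ Finset.range n, 1 / ((i:ℝ) + 1 + C) := by
        rw [← Finset.Ico_add_one_right_eq_Icc, Finset.sum_Ico_eq_sum_range]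
        refine Finset.sum_congr rfl fun i _ => ?_
        push_cast; ring_nf
      have hF0 : F 0 = Real.log (1 + C) := by simp [hF_def]
      have hFn : F n = Real.log ((n:ℝ) + 1 + C) := rfl
      rw [h2]
      calc Real.log ((n:ℝ) + 1 + C) - Real.log (1 + C) = F n - F 0 := by
            rw [hF0, hFn]
        _ = ∑ i ∈ Finset.range n, (F (i + 1) - F i) := h0
        _ ≤ ∑ i ∈ Finset.range n, 1 / ((i:ℝ) + 1 + C) := h1
    have hSsum : ∀ n : ℕ, C * (Real.log ((n:ℝ) + 1 + C) - Real.log (1 + C))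
        ≤ ∑ k ∈ Finset.Icc 1 n, γ k := by
      intro n
      have : ∑ k ∈ Finset.Icc 1 n, γ k = C * ∑ k ∈ Finset.Icc 1 n, 1 / ((k:ℝ) + C) := by
        rw [Finset.mul_sum]
        refine Finset.sum_congr rfl fun k hk => ?_
        rw [hγ' k (Finset.mem_Icc.mp hk).1, mul_one_div]
      rw [this]
      exact mul_le_mul_of_nonneg_left (htel n) hC.le
    have hg : Summable (fun n : ℕ => Real.exp (s * Real.log (1 + C)) * (n:ℝ) ^ (-s)) :=
      (Real.summable_nat_rpow.mpr (by linarith)).mul_left _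
    refine summable_of_eventually_le' hfnn hg ?_
    filter_upwards [Filter.eventually_ge_atTop 1] with n hn1
    have hn0 : (0:ℝ) < (n:ℝ) := by exact_mod_cast hn1
    have hn1C : (0:ℝ) < (n:ℝ) + 1 + C := by positivity
    have step1 : Real.exp (-(pB * ∑ k ∈ Finset.Icc 1 n, γ k))
        ≤ Real.exp (-(s * (Real.log ((n:ℝ) + 1 + C) - Real.log (1 + C)))) := by
      apply Real.exp_le_exp.mpr
      have := mul_le_mul_of_nonneg_left (hSsum n) hpB0.le
      rw [hs_def]
      nlinarith
    have step2 : Real.exp (-(s * (Real.log ((n:ℝ) + 1 + C) - Real.log (1 + C))))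
        = Real.exp (s * Real.log (1 + C)) * ((n:ℝ) + 1 + C) ^ (-s) := by
      rw [Real.rpow_def_of_pos hn1C, ← Real.exp_add]
      ring_nf
    have step3 : ((n:ℝ) + 1 + C) ^ (-s) ≤ (n:ℝ) ^ (-s) :=
      Real.rpow_le_rpow_of_nonpos hn0 (by linarith) (by linarith)
    calc ∏ k ∈ Finset.Icc 1 n, (1 - pB * γ k)
        ≤ Real.exp (-(pB * ∑ k ∈ Finset.Icc 1 n, γ k)) := hf_le n
      _ ≤ Real.exp (s * Real.log (1 + C)) * ((n:ℝ) + 1 + C) ^ (-s) := by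
          rw [← step2]; exact step1
      _ ≤ Real.exp (s * Real.log (1 + C)) * (n:ℝ) ^ (-s) :=
          mul_le_mul_of_nonneg_left step3 (Real.exp_pos _).le
end

section
/- Let $(\Delta_n)_{n\ge0}$ be positive reals with $\Delta_0=1$, set $S_n := \sum_{k=0}^n \Delta_k$ and $\gamma_n := \Delta_n/S_n$ for $n\ge1$. Then for every $n\ge1$, $\log S_n - \sum_{k=1}^n \frac{\gamma_k^2}{1-\gamma_k} \le \Gamma_n \le \log S_n$, where $\Gamma_n := \sum_{k=1}^n \gamma_k$. -/
open Finset

theorem stmt3 (Δ : ℕ → ℝ) (hΔpos : ∀ n, 0 < Δ n) (hΔ0 : Δ 0 = 1)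
    (S : ℕ → ℝ) (hS : ∀ n, S n = ∑ k ∈ Finset.range (n + 1), Δ k)
    (γ : ℕ → ℝ) (hγ : ∀ n ≥ 1, γ n = Δ n / S n)
    (Γ : ℕ → ℝ) (hΓ : ∀ n, Γ n = ∑ k ∈ Finset.Icc 1 n, γ k) :
    ∀ n ≥ 1, Real.log (S n) - ∑ k ∈ Finset.Icc 1 n, (γ k) ^ 2 / (1 - γ k) ≤ Γ n
      ∧ Γ n ≤ Real.log (S n) := by
  have hSpos : ∀ n, 0 < S n := by
    intro n
    rw [hS]
    exact Finset.sum_pos (fun i _ => hΔpos i) (by simp)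
  have hSsucc : ∀ n, S (n + 1) = S n + Δ (n + 1) := by
    intro n
    rw [hS, hS, Finset.sum_range_succ]
  have hγpos : ∀ m, 0 < γ (m + 1) := fun m => by
    rw [hγ (m+1) (by omega)]
    exact div_pos (hΔpos _) (hSpos _)
  have hγlt1 : ∀ m, γ (m + 1) < 1 := fun m => by
    rw [hγ (m+1) (by omega)]
    rw [div_lt_one (hSpos _)]
    rw [hSsucc]
    linarith [hSpos m]
  have hlog : ∀ m, Real.log (1 - γ (m + 1)) = Real.log (S m) - Real.log (S (m + 1)) := by
    intro m
    have h1γ : 1 - γ (m + 1) = S m / S (m + 1) := by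
      rw [hγ (m+1) (by omega)]
      rw [eq_div_iff (hSpos (m+1)).ne', sub_mul, one_mul,
        div_mul_cancel₀ _ (hSpos (m+1)).ne', hSsucc]
      ring
    rw [h1γ, Real.log_div (hSpos m).ne' (hSpos (m+1)).ne']
  have step_lo : ∀ m, γ (m + 1) ≤ Real.log (S (m + 1)) - Real.log (S m) := by
    intro m
    have h : Real.log (1 - γ (m+1)) ≤ (1 - γ (m+1)) - 1 :=
      Real.log_le_sub_one_of_pos (by linarith [hγlt1 m])
    rw [hlog] at h
    linarith
  have step_hi : ∀ m, Real.log (S (m + 1)) - Real.log (S m)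
      ≤ γ (m + 1) + γ (m + 1) ^ 2 / (1 - γ (m + 1)) := by
    intro m
    have hγ1 : 0 < 1 - γ (m + 1) := by linarith [hγlt1 m]
    have h : Real.log ((1 - γ (m+1))⁻¹) ≤ (1 - γ (m+1))⁻¹ - 1 :=
      Real.log_le_sub_one_of_pos (by positivity)
    rw [Real.log_inv, hlog] at h
    have key : (1 - γ (m+1))⁻¹ - 1 = γ (m + 1) + γ (m + 1) ^ 2 / (1 - γ (m + 1)) := by
      field_simp
      ring
    linarith [key ▸ h]
  have hS0 : S 0 = 1 := by rw [hS]; simpa using hΔ0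
  intro n hn
  induction n, hn using Nat.le_induction with
  | base =>
    rw [hΓ]
    simp only [Finset.Icc_self, Finset.sum_singleton]
    have hlo := step_lo 0
    have hhi := step_hi 0
    have hγ1 : 0 < 1 - γ (0 + 1) := by linarith [hγlt1 0]
    have hq : 0 ≤ γ (0 + 1) ^ 2 / (1 - γ (0 + 1)) := by positivity
    rw [hS0, Real.log_one] at hlo hhi
    norm_num at hlo hhi hq ⊢
    constructor <;> linarith
  | succ m hm ih =>
    obtain ⟨ihlo, ihhi⟩ := ih
    have hsum : ∀ f : ℕ → ℝ, ∑ k ∈ Finset.Icc 1 (m+1), f k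
        = (∑ k ∈ Finset.Icc 1 m, f k) + f (m+1) := by
      intro f
      rw [← Finset.sum_Icc_succ_top (by omega : 1 ≤ m + 1)]
    rw [hΓ] at ihlo ihhi ⊢
    rw [hsum, hsum]
    constructor
    · have := step_hi m; linarith
    · have := step_lo m; linarith
end

section
/- Let $p_B\in(0,1]$, $C>0$, and $\gamma_n := C/(n+C)$ for $n\ge1$ with $Cp_B\le1$. Then $\gamma_n = O(\Gamma_n e^{-p_B\Gamma_n})$, where $\Gamma_n = \sum_{k=1}^n\gamma_k$. -/
open Finset Filter

theorem stmt5 (pB C : ℝ) (hpB : pB ∈ Set.Ioc (0:ℝ) 1) (hC : 0 < C)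
    (hCpB : C * pB ≤ 1) (γ : ℕ → ℝ) (hγ : ∀ n ≥ 1, γ n = C / (n + C))
    (Γ : ℕ → ℝ) (hΓ : ∀ n, Γ n = ∑ k ∈ Finset.Icc 1 n, γ k) :
    (fun n => γ n) =O[atTop] (fun n => Γ n * Real.exp (-pB * Γ n)) := by
  obtain ⟨hpB0, hpB1⟩ := hpB
  -- upper bound on Γ
  have hΓle : ∀ n : ℕ, Γ n ≤ C * (Real.log (n + C) - Real.log C) := by
    intro n
    induction n with
    | zero => simp [hΓ 0]
    | succ n ih =>
      have hsum : Γ (n+1) = Γ n + γ (n+1) := by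
        rw [hΓ, hΓ, Finset.sum_Icc_succ_top (by omega : 1 ≤ n + 1)]
      have hpos : (0:ℝ) < (n:ℝ) + C := by positivity
      have hpos' : (0:ℝ) < (n:ℝ) + 1 + C := by linarith
      have hstep : γ (n+1) ≤ C * (Real.log ((n:ℝ) + 1 + C) - Real.log ((n:ℝ) + C)) := by
        rw [hγ (n+1) (by omega)]
        have h1 : 1 - (((n:ℝ)+1+C)/((n:ℝ)+C))⁻¹ ≤ Real.log (((n:ℝ)+1+C)/((n:ℝ)+C)) :=
          Real.one_sub_inv_le_log_of_pos (by positivity)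
        rw [Real.log_div (by positivity) (by positivity)] at h1
        have h2 : 1 - (((n:ℝ)+1+C)/((n:ℝ)+C))⁻¹ = 1/((n:ℝ)+1+C) := by
          rw [inv_div]
          field_simp
          ring
        rw [h2] at h1
        have : (↑(n+1):ℝ) + C = (n:ℝ) + 1 + C := by push_cast; ring
        rw [this]
        calc C / ((n:ℝ)+1+C) = C * (1/((n:ℝ)+1+C)) := by ring
          _ ≤ C * (Real.log ((n:ℝ)+1+C) - Real.log ((n:ℝ)+C)) := by
              exact mul_le_mul_of_nonneg_left h1 hC.le
      have := hsum ▸ add_le_add ih hstep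
      calc Γ (n+1) ≤ _ := this
        _ = C * (Real.log (↑(n+1) + C) - Real.log C) := by push_cast; ring
  -- lower bound on Γ for n ≥ 1
  have hΓlb : ∀ n : ℕ, 1 ≤ n → C / (1 + C) ≤ Γ n := by
    intro n hn
    rw [hΓ]
    have h1 : γ 1 ≤ ∑ k ∈ Finset.Icc 1 n, γ k := by
      apply Finset.single_le_sum (f := γ)
      · intro k hk
        rw [hγ k (Finset.mem_Icc.mp hk).1]
        have : (0:ℝ) < (k:ℝ) + C := by positivity
        positivity
      · exact Finset.mem_Icc.mpr ⟨le_refl 1, hn⟩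
    rw [hγ 1 le_rfl] at h1
    simpa using h1
  rw [Asymptotics.isBigO_iff]
  refine ⟨(1 + C) / C, ?_⟩
  filter_upwards [Filter.eventually_ge_atTop 1] with n hn
  have hpos : (0:ℝ) < (n:ℝ) + C := by positivity
  have hγn : γ n = C / ((n:ℝ) + C) := hγ n hn
  have hγpos : 0 < γ n := by rw [hγn]; positivity
  -- exp bound
  have hx1 : C / ((n:ℝ) + C) ≤ 1 := by
    rw [div_le_one hpos]
    have : (1:ℝ) ≤ (n:ℝ) := by exact_mod_cast hn
    linarith
  have hxpos : (0:ℝ) < C / ((n:ℝ) + C) := by positivity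
  have hexp : γ n ≤ Real.exp (-pB * Γ n) := by
    have h1 : -pB * Γ n ≥ -pB * (C * (Real.log ((n:ℝ) + C) - Real.log C)) := by
      have := hΓle n
      nlinarith [hpB0]
    have h2 : -pB * (C * (Real.log ((n:ℝ) + C) - Real.log C))
        = (C * pB) * Real.log (C / ((n:ℝ) + C)) := by
      rw [Real.log_div (ne_of_gt hC) (ne_of_gt hpos)]
      ring
    have h3 : Real.exp ((C * pB) * Real.log (C / ((n:ℝ) + C)))
        = (C / ((n:ℝ) + C)) ^ (C * pB) := by
      rw [Real.rpow_def_of_pos hxpos]; ring_nf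
    have h4 : C / ((n:ℝ) + C) ≤ (C / ((n:ℝ) + C)) ^ (C * pB) := by
      calc C / ((n:ℝ) + C) = (C / ((n:ℝ) + C)) ^ (1:ℝ) := (Real.rpow_one _).symm
        _ ≤ (C / ((n:ℝ) + C)) ^ (C * pB) :=
          Real.rpow_le_rpow_of_exponent_ge hxpos hx1 hCpB
    calc γ n = C / ((n:ℝ) + C) := hγn
      _ ≤ (C / ((n:ℝ) + C)) ^ (C * pB) := h4
      _ = Real.exp ((C * pB) * Real.log (C / ((n:ℝ) + C))) := h3.symm
      _ ≤ Real.exp (-pB * Γ n) := Real.exp_le_exp.mpr (by linarith [h1, h2.le, h2.ge])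
  have hΓn : C / (1 + C) ≤ Γ n := hΓlb n hn
  have hΓnpos : 0 < Γ n := lt_of_lt_of_le (by positivity) hΓn
  have hRHSpos : 0 < Γ n * Real.exp (-pB * Γ n) := by positivity
  rw [Real.norm_eq_abs, Real.norm_eq_abs, abs_of_pos hγpos, abs_of_pos hRHSpos]
  have key : γ n ≤ ((1 + C) / C) * (Γ n * Real.exp (-pB * Γ n)) := by
    have h5 : Γ n * Real.exp (-pB * Γ n) ≥ (C / (1 + C)) * γ n := by
      have := Real.exp_pos (-pB * Γ n)
      nlinarith [mul_le_mul hΓn hexp hγpos.le hΓnpos.le]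
    have hC1 : (0:ℝ) < (1 + C) / C := by positivity
    have h6 := mul_le_mul_of_nonneg_left h5 hC1.le
    have h7 : (1 + C) / C * (C / (1 + C) * γ n) = γ n := by
      field_simp
    linarith [h6, h7.ge, h7.le]
  exact key
end

section
/- Let $0<\pi\le1$, $x\in(0,1)$, $(\gamma_n)_{n\ge1}$ a sequence in $(0,1)$ with $\Gamma_n:=\sum_{k=1}^n\gamma_k$, and define $x_0=x$, $x_{n+1}=x_n+\pi\gamma_{n+1}x_n(1-x_n)$. Then $(x_n)$ is increasing, $x_n\in(0,1)$ for all $n$, and $0 \le 1-x_n \le (1-x)e^{-\pi x\,\Gamma_n}$ for all $n\ge0$. -/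
open Finset

theorem stmt6 (π x₀ : ℝ) (hπ : π ∈ Set.Ioc (0:ℝ) 1) (hx₀ : x₀ ∈ Set.Ioo (0:ℝ) 1)
    (γ : ℕ → ℝ) (hγ : ∀ n ≥ 1, γ n ∈ Set.Ioo (0:ℝ) 1)
    (Γ : ℕ → ℝ) (hΓ : ∀ n, Γ n = ∑ k ∈ Finset.Icc 1 n, γ k)
    (x : ℕ → ℝ) (hx0 : x 0 = x₀)
    (hrec : ∀ n, x (n + 1) = x n + π * γ (n + 1) * x n * (1 - x n)) :
    StrictMono x ∧ (∀ n, x n ∈ Set.Ioo (0:ℝ) 1) ∧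
      ∀ n, 0 ≤ 1 - x n ∧ 1 - x n ≤ (1 - x₀) * Real.exp (-π * x₀ * Γ n) := by
  obtain ⟨hπ0, hπ1⟩ := hπ
  obtain ⟨hx0p, hx01⟩ := hx₀
  have hmem : ∀ n, x n ∈ Set.Ioo (0:ℝ) 1 := by
    intro n
    induction n with
    | zero => rw [hx0]; exact ⟨hx0p, hx01⟩
    | succ n ih =>
      obtain ⟨h0, h1⟩ := ih
      obtain ⟨hg0, hg1⟩ := hγ (n+1) (by omega)
      constructor
      · rw [hrec n]
        nlinarith [mul_pos (mul_pos hπ0 hg0) h0]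
      · have : 1 - x (n+1) = (1 - x n) * (1 - π * γ (n+1) * x n) := by
          rw [hrec n]; ring
        have h2 : π * γ (n+1) * x n < 1 := by
          have t1 := mul_lt_of_lt_one_right (mul_pos hπ0 hg0) h1
          have t2 := mul_le_of_le_one_left hg0.le hπ1
          linarith
        nlinarith [mul_pos (by linarith : (0:ℝ) < 1 - x n) (by linarith : (0:ℝ) < 1 - π * γ (n+1) * x n)]
  have hstep : ∀ n, x n < x (n+1) := by
    intro n
    obtain ⟨h0, h1⟩ := hmem n
    obtain ⟨hg0, hg1⟩ := hγ (n+1) (by omega)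
    rw [hrec n]
    nlinarith [mul_pos (mul_pos (mul_pos hπ0 hg0) h0) (by linarith : (0:ℝ) < 1 - x n)]
  have hmono : StrictMono x := strictMono_nat_of_lt_succ hstep
  refine ⟨hmono, hmem, ?_⟩
  intro n
  induction n with
  | zero =>
    rw [hΓ 0]
    simp [hx0]
    linarith
  | succ n ih =>
    obtain ⟨ih0, ih1⟩ := ih
    obtain ⟨h0, h1⟩ := hmem n
    obtain ⟨hg0, hg1⟩ := hγ (n+1) (by omega)
    have hxge : x₀ ≤ x n := by
      rw [← hx0]; exact hmono.le_iff_le.mpr (Nat.zero_le n)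
    refine ⟨by linarith [(hmem (n+1)).2], ?_⟩
    have hfac : 1 - x (n+1) = (1 - x n) * (1 - π * γ (n+1) * x n) := by
      rw [hrec n]; ring
    have hΓs : Γ (n+1) = Γ n + γ (n+1) := by
      rw [hΓ (n+1), hΓ n, Finset.sum_Icc_succ_top (by omega)]
    have hexp1 : 1 - π * γ (n+1) * x n ≤ Real.exp (-(π * x₀ * γ (n+1))) := by
      calc 1 - π * γ (n+1) * x n ≤ 1 - π * x₀ * γ (n+1) := by nlinarith [mul_le_mul_of_nonneg_left hxge (mul_pos hπ0 hg0).le]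
        _ ≤ Real.exp (-(π * x₀ * γ (n+1))) := by
            have := Real.add_one_le_exp (-(π * x₀ * γ (n+1)))
            linarith
    have hnn : 0 ≤ 1 - π * γ (n+1) * x n := by
      have := hfac
      nlinarith [(hmem (n+1)).2]
    calc 1 - x (n+1) = (1 - x n) * (1 - π * γ (n+1) * x n) := hfac
      _ ≤ ((1 - x₀) * Real.exp (-π * x₀ * Γ n)) * Real.exp (-(π * x₀ * γ (n+1))) := by
          exact mul_le_mul ih1 hexp1 hnn (mul_nonneg (by linarith) (Real.exp_nonneg _))
      _ = (1 - x₀) * Real.exp (-π * x₀ * Γ (n+1)) := by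
          rw [hΓs, mul_assoc, ← Real.exp_add]; congr 1; ring
end

section
/- With the same setup ($0<\pi\le1$, $x\in(0,1)$, steps $\gamma_n\in(0,1)$, $x_{n+1}=x_n+\pi\gamma_{n+1}x_n(1-x_n)$), one has $1-x_n \le (1-x)\exp\big((1/x-1)e^{\pi x}\big)\,e^{-\pi\Gamma_n}$ for all $n\ge0$, so $1-x_n = O(e^{-\pi\Gamma_n})$; and moreover $1-x_n \ge (1-x)\prod_{k=1}^n(1-\pi\gamma_k)$. -/
open Finset Filter

theorem stmt7 (π x₀ : ℝ) (hπ : π ∈ Set.Ioc (0:ℝ) 1) (hx₀ : x₀ ∈ Set.Ioo (0:ℝ) 1)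
    (γ : ℕ → ℝ) (hγ : ∀ n ≥ 1, γ n ∈ Set.Ioo (0:ℝ) 1)
    (Γ : ℕ → ℝ) (hΓ : ∀ n, Γ n = ∑ k ∈ Finset.Icc 1 n, γ k)
    (x : ℕ → ℝ) (hx0 : x 0 = x₀)
    (hrec : ∀ n, x (n + 1) = x n + π * γ (n + 1) * x n * (1 - x n)) :
    (∀ n, 1 - x n ≤ (1 - x₀) * Real.exp ((1 / x₀ - 1) * Real.exp (π * x₀))
        * Real.exp (-π * Γ n)) ∧
    (fun n => 1 - x n) =O[atTop] (fun n => Real.exp (-π * Γ n)) ∧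
    (∀ n, (1 - x₀) * ∏ k ∈ Finset.Icc 1 n, (1 - π * γ k) ≤ 1 - x n) := by
  obtain ⟨hπ0, hπ1⟩ := hπ
  obtain ⟨hx00, hx01⟩ := hx₀
  have hΓ0 : Γ 0 = 0 := by rw [hΓ]; simp
  have hΓs : ∀ n, Γ (n+1) = Γ n + γ (n+1) := by
    intro n; rw [hΓ, hΓ, Finset.sum_Icc_succ_top (by omega)]
  have hx : ∀ n, 0 < x n ∧ x n < 1 := by
    intro n
    induction n with
    | zero => rw [hx0]; exact ⟨hx00, hx01⟩
    | succ n ih =>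
      obtain ⟨h0, h1⟩ := ih
      obtain ⟨hg0, hg1⟩ := hγ (n+1) (by omega)
      have hpg : π * γ (n+1) < 1 := by nlinarith
      have hpgx : π * γ (n+1) * x n < 1 := by nlinarith [mul_pos hπ0 hg0]
      have hinc : 0 < π * γ (n+1) * x n * (1 - x n) :=
        mul_pos (mul_pos (mul_pos hπ0 hg0) h0) (by linarith)
      constructor
      · rw [hrec]; linarith
      · have heq : 1 - x (n+1) = (1 - x n) * (1 - π * γ (n+1) * x n) := by
          rw [hrec]; ring
        nlinarith [mul_pos (show (0:ℝ) < 1 - x n by linarith)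
          (show (0:ℝ) < 1 - π * γ (n+1) * x n by linarith)]
  have hfactor : ∀ n, 1 - x (n+1) = (1 - x n) * (1 - π * γ (n+1) * x n) := by
    intro n; rw [hrec]; ring
  have hmono : ∀ n, x₀ ≤ x n := by
    intro n; induction n with
    | zero => rw [hx0]
    | succ n ih =>
      obtain ⟨hg0, hg1⟩ := hγ (n+1) (by omega)
      have h := hx n
      have hinc : 0 < π * γ (n+1) * x n * (1 - x n) :=
        mul_pos (mul_pos (mul_pos hπ0 hg0) h.1) (by linarith [h.2])
      rw [hrec]; linarith
  set a := π * x₀ with ha_def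
  have ha : 0 < a := mul_pos hπ0 hx00
  -- crude exponential bound
  have hcrude : ∀ n, 1 - x n ≤ (1 - x₀) * Real.exp (-(a * Γ n)) := by
    intro n; induction n with
    | zero => rw [hx0, hΓ0]; simp
    | succ n ih =>
      obtain ⟨hg0, hg1⟩ := hγ (n+1) (by omega)
      have hxn := hx n
      have h1 : 1 - π * γ (n+1) * x n ≤ Real.exp (-(a * γ (n+1))) := by
        have h2 : 1 - π * γ (n+1) * x n ≤ 1 - a * γ (n+1) := by
          rw [ha_def]
          nlinarith [mul_le_mul_of_nonneg_left (hmono n) (le_of_lt (mul_pos hπ0 hg0))]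
        have h3 := Real.add_one_le_exp (-(a * γ (n+1)))
        linarith
      have hpg : π * γ (n+1) < 1 := by nlinarith
      have hfpos : 0 ≤ 1 - π * γ (n+1) * x n := by
        nlinarith [mul_pos hπ0 hg0, hxn.1, hxn.2]
      have h2 : (1 - x n) * (1 - π * γ (n+1) * x n)
          ≤ ((1 - x₀) * Real.exp (-(a * Γ n))) * Real.exp (-(a * γ (n+1))) :=
        mul_le_mul ih h1 hfpos (mul_nonneg (by linarith) (Real.exp_pos _).le)
      rw [hfactor n, hΓs n]
      calc (1 - x n) * (1 - π * γ (n+1) * x n)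
          ≤ ((1 - x₀) * Real.exp (-(a * Γ n))) * Real.exp (-(a * γ (n+1))) := h2
        _ = (1 - x₀) * Real.exp (-(a * (Γ n + γ (n+1)))) := by
            rw [show -(a * (Γ n + γ (n+1))) = -(a * Γ n) + -(a * γ (n+1)) by ring,
              Real.exp_add]; ring
  -- telescoping sum bound
  have hS : ∀ n, ∑ k ∈ Finset.Icc 1 n, γ k * Real.exp (-(a * Γ (k-1)))
      ≤ (Real.exp a / a) * (1 - Real.exp (-(a * Γ n))) := by
    intro n; induction n with
    | zero => simp [hΓ0]
    | succ n ih =>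
      obtain ⟨hg0, hg1⟩ := hγ (n+1) (by omega)
      rw [Finset.sum_Icc_succ_top (by omega)]
      have hkey : γ (n+1) * Real.exp (-(a * Γ n))
          ≤ (Real.exp a / a) * (Real.exp (-(a * Γ n)) - Real.exp (-(a * Γ (n+1)))) := by
        have hE : Real.exp (-(a * Γ (n+1)))
            = Real.exp (-(a * Γ n)) * Real.exp (-(a * γ (n+1))) := by
          rw [hΓs n, ← Real.exp_add]; ring_nf
        rw [hE]
        have hgle : γ (n+1) ≤ (Real.exp a / a) * (1 - Real.exp (-(a * γ (n+1)))) := by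
          set t := a * γ (n+1) with ht_def
          have ht : 0 < t := mul_pos ha hg0
          have hFE : Real.exp (-t) * Real.exp t = 1 := by
            rw [← Real.exp_add]; simp
          have h1 : t + 1 ≤ Real.exp t := Real.add_one_le_exp t
          have hF : 0 < Real.exp (-t) := Real.exp_pos _
          -- t * exp(-t) ≤ 1 - exp(-t)
          have h2 : t * Real.exp (-t) ≤ 1 - Real.exp (-t) := by nlinarith
          -- (e^a/a)*(1-e^{-t}) ≥ (e^a/a)*t*e^{-t} = γ * e^a * e^{-t} ≥ γ
          have h3 : (Real.exp a / a) * (t * Real.exp (-t))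
              = γ (n+1) * (Real.exp a * Real.exp (-t)) := by
            field_simp [ht_def]; ring
          have h4 : (1:ℝ) ≤ Real.exp a * Real.exp (-t) := by
            rw [← Real.exp_add]
            have : (0:ℝ) ≤ a + -t := by
              rw [ht_def]; nlinarith
            calc (1:ℝ) = Real.exp 0 := (Real.exp_zero).symm
              _ ≤ Real.exp (a + -t) := Real.exp_le_exp.mpr this
          have h5 : (Real.exp a / a) * (t * Real.exp (-t))
              ≤ (Real.exp a / a) * (1 - Real.exp (-t)) := by
            apply mul_le_mul_of_nonneg_left h2
            positivity
          nlinarith [hg0]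
        have hEp : 0 < Real.exp (-(a * Γ n)) := Real.exp_pos _
        calc γ (n+1) * Real.exp (-(a * Γ n))
            ≤ ((Real.exp a / a) * (1 - Real.exp (-(a * γ (n+1))))) * Real.exp (-(a * Γ n)) := by
              apply mul_le_mul_of_nonneg_right hgle (le_of_lt hEp)
          _ = (Real.exp a / a) * (Real.exp (-(a * Γ n))
              - Real.exp (-(a * Γ n)) * Real.exp (-(a * γ (n+1)))) := by ring
      have hsimp : ((n+1) : ℕ) - 1 = n := by omega
      rw [hsimp]
      linarith [ih, hkey]
  -- upper bound via product of exp(-π γ_k x_{k-1})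
  have hup0 : ∀ n, 1 - x n
      ≤ (1 - x₀) * Real.exp (-(π * ∑ k ∈ Finset.Icc 1 n, γ k * x (k-1))) := by
    intro n; induction n with
    | zero => simp [hx0]
    | succ n ih =>
      obtain ⟨hg0, hg1⟩ := hγ (n+1) (by omega)
      have hxn := hx n
      have h1 : 1 - π * γ (n+1) * x n ≤ Real.exp (-(π * γ (n+1) * x n)) := by
        have := Real.add_one_le_exp (-(π * γ (n+1) * x n)); linarith
      have hpg : π * γ (n+1) < 1 := by nlinarith
      have hfpos : 0 ≤ 1 - π * γ (n+1) * x n := by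
        nlinarith [mul_pos hπ0 hg0, hxn.1, hxn.2]
      have h2 : (1 - x n) * (1 - π * γ (n+1) * x n)
          ≤ ((1 - x₀) * Real.exp (-(π * ∑ k ∈ Finset.Icc 1 n, γ k * x (k-1))))
            * Real.exp (-(π * γ (n+1) * x n)) :=
        mul_le_mul ih h1 hfpos (mul_nonneg (by linarith) (Real.exp_pos _).le)
      rw [hfactor n, Finset.sum_Icc_succ_top (by omega)]
      have hsimp : ((n+1) : ℕ) - 1 = n := by omega
      rw [hsimp]
      calc (1 - x n) * (1 - π * γ (n+1) * x n)
          ≤ ((1 - x₀) * Real.exp (-(π * ∑ k ∈ Finset.Icc 1 n, γ k * x (k-1))))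
            * Real.exp (-(π * γ (n+1) * x n)) := h2
        _ = (1 - x₀) * Real.exp (-(π * ((∑ k ∈ Finset.Icc 1 n, γ k * x (k-1))
              + γ (n+1) * x n))) := by
            rw [show -(π * ((∑ k ∈ Finset.Icc 1 n, γ k * x (k-1)) + γ (n+1) * x n))
                = -(π * ∑ k ∈ Finset.Icc 1 n, γ k * x (k-1)) + -(π * γ (n+1) * x n)
              by ring, Real.exp_add]; ring
  -- sum comparison
  have hsum : ∀ n, Γ n - (1 - x₀) * (Real.exp a / a)
      ≤ ∑ k ∈ Finset.Icc 1 n, γ k * x (k-1) := by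
    intro n
    have h1 : Γ n - ∑ k ∈ Finset.Icc 1 n, γ k * x (k-1)
        = ∑ k ∈ Finset.Icc 1 n, γ k * (1 - x (k-1)) := by
      rw [hΓ, ← Finset.sum_sub_distrib]
      apply Finset.sum_congr rfl
      intro k _; ring
    have h2 : ∑ k ∈ Finset.Icc 1 n, γ k * (1 - x (k-1))
        ≤ ∑ k ∈ Finset.Icc 1 n, γ k * ((1 - x₀) * Real.exp (-(a * Γ (k-1)))) := by
      apply Finset.sum_le_sum
      intro k hk
      obtain ⟨hk1, _⟩ := Finset.mem_Icc.mp hk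
      obtain ⟨hg0, _⟩ := hγ k hk1
      exact mul_le_mul_of_nonneg_left (hcrude (k-1)) (le_of_lt hg0)
    have h3 : ∑ k ∈ Finset.Icc 1 n, γ k * ((1 - x₀) * Real.exp (-(a * Γ (k-1))))
        = (1 - x₀) * ∑ k ∈ Finset.Icc 1 n, γ k * Real.exp (-(a * Γ (k-1))) := by
      rw [Finset.mul_sum]
      apply Finset.sum_congr rfl
      intro k _; ring
    have h4 := hS n
    have hE : 0 < Real.exp (-(a * Γ n)) := Real.exp_pos _
    have h5 : (1 - x₀) * ∑ k ∈ Finset.Icc 1 n, γ k * Real.exp (-(a * Γ (k-1)))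
        ≤ (1 - x₀) * (Real.exp a / a) := by
      have h6 : (Real.exp a / a) * (1 - Real.exp (-(a * Γ n))) ≤ Real.exp a / a := by
        have : 0 < Real.exp a / a := by positivity
        nlinarith
      nlinarith [h4, hx01]
    linarith [h1 ▸ (le_trans h2 (h3 ▸ h5))]
  -- the sharp upper bound
  have hupper : ∀ n, 1 - x n ≤ (1 - x₀) * Real.exp ((1 / x₀ - 1) * Real.exp (π * x₀))
      * Real.exp (-π * Γ n) := by
    intro n
    have h1 := hup0 n
    have h2 : -(π * ∑ k ∈ Finset.Icc 1 n, γ k * x (k-1))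
        ≤ -(π * (Γ n - (1 - x₀) * (Real.exp a / a))) := by
      have := hsum n
      nlinarith [hπ0]
    have h3 : Real.exp (-(π * ∑ k ∈ Finset.Icc 1 n, γ k * x (k-1)))
        ≤ Real.exp (-(π * (Γ n - (1 - x₀) * (Real.exp a / a)))) :=
      Real.exp_le_exp.mpr h2
    have h4 : -(π * (Γ n - (1 - x₀) * (Real.exp a / a)))
        = (1 / x₀ - 1) * Real.exp (π * x₀) + (-π * Γ n) := by
      rw [ha_def]
      field_simp
      ring
    calc 1 - x n ≤ (1 - x₀) * Real.exp (-(π * ∑ k ∈ Finset.Icc 1 n, γ k * x (k-1))) := h1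
      _ ≤ (1 - x₀) * Real.exp (-(π * (Γ n - (1 - x₀) * (Real.exp a / a)))) := by
          apply mul_le_mul_of_nonneg_left h3 (by linarith)
      _ = (1 - x₀) * Real.exp ((1 / x₀ - 1) * Real.exp (π * x₀)) * Real.exp (-π * Γ n) := by
          rw [h4, Real.exp_add]; ring
  refine ⟨hupper, ?_, ?_⟩
  · rw [Asymptotics.isBigO_iff]
    refine ⟨(1 - x₀) * Real.exp ((1 / x₀ - 1) * Real.exp (π * x₀)), Eventually.of_forall ?_⟩
    intro n
    have h1 := hupper n
    have hxn := hx n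
    rw [Real.norm_eq_abs, Real.norm_eq_abs, abs_of_nonneg (by linarith [hxn.2]),
      abs_of_pos (Real.exp_pos _)]
    exact h1
  · intro n; induction n with
    | zero => simp [hx0]
    | succ n ih =>
      obtain ⟨hg0, hg1⟩ := hγ (n+1) (by omega)
      have hxn := hx n
      have hP : 0 ≤ ∏ k ∈ Finset.Icc 1 n, (1 - π * γ k) := by
        apply Finset.prod_nonneg
        intro k hk
        obtain ⟨hk1, _⟩ := Finset.mem_Icc.mp hk
        obtain ⟨hg0', hg1'⟩ := hγ k hk1
        nlinarith
      rw [hfactor n, Finset.prod_Icc_succ_top (by omega)]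
      have h1 : 1 - π * γ (n+1) ≤ 1 - π * γ (n+1) * x n := by
        nlinarith [mul_pos hπ0 hg0, hxn.2]
      have h2 : 0 ≤ 1 - π * γ (n+1) := by nlinarith
      have h3 : 0 ≤ 1 - x n := by linarith [hxn.2]
      rw [← mul_assoc]
      exact mul_le_mul ih h1 h2 h3
end

section
/- In the martingale case $p_A=p_B=p\in(0,1]$ of the two-armed bandit algorithm started at $x\in(0,1)$, for every $n\ge1$: $\mathbb{E}_x[X_n(1-X_n)] = x(1-x)\prod_{k=1}^n(1-p\gamma_k^2)$. -/
open MeasureTheory ProbabilityTheory Filter Set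


noncomputable def unif : Measure ℝ := volume.restrict (Set.Icc (0:ℝ) 1)

instance : IsProbabilityMeasure unif := by
  constructor; rw [unif, Measure.restrict_apply_univ, Real.volume_Icc]; norm_num

lemma bdd_integrable {α : Type*} [MeasurableSpace α] {m : Measure α} [IsFiniteMeasure m]
    {f : α → ℝ} (hf : AEStronglyMeasurable f m) {C : ℝ} (h : ∀ᵐ a ∂m, |f a| ≤ C) :
    Integrable f m :=
  (integrable_const C).mono' hf (h.mono fun a ha => by simpa [Real.norm_eq_abs] using ha)

lemma unif_ind (t : ℝ) (ht : t ∈ Set.Icc (0:ℝ) 1) :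
    ∫ u, (if u ≤ t then (1:ℝ) else 0) ∂unif = t := by
  have h1 : (fun u => if u ≤ t then (1:ℝ) else 0) = (Set.Iic t).indicator (fun _ => (1:ℝ)) := by
    ext u; simp [Set.indicator_apply, Set.mem_Iic]
  have h2 : Set.Iic t ∩ Set.Icc (0:ℝ) 1 = Set.Icc 0 t := by
    ext z
    simp only [Set.mem_inter_iff, Set.mem_Iic, Set.mem_Icc]
    exact ⟨fun ⟨a, b, c⟩ => ⟨b, a⟩, fun ⟨a, b⟩ => ⟨b, a, b.trans ht.2⟩⟩
  rw [h1, integral_indicator_const (1:ℝ) measurableSet_Iic, unif,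
    measureReal_def, Measure.restrict_apply measurableSet_Iic, h2, Real.volume_Icc, sub_zero, smul_eq_mul, mul_one,
    ENNReal.toReal_ofReal ht.1]

lemma next_mem (y g b i : ℝ) (hy : y ∈ Set.Icc (0:ℝ) 1) (hg : g ∈ Set.Ioo (0:ℝ) 1)
    (hb : b = 0 ∨ b = 1) (hi : i = 0 ∨ i = 1) :
    y + g * b * (i - y) ∈ Set.Icc (0:ℝ) 1 := by
  obtain ⟨hy0, hy1⟩ := hy
  obtain ⟨hg0, hg1⟩ := hg
  rcases hb with hb | hb <;> rcases hi with hi | hi <;> subst hb <;> subst hi <;>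
    constructor <;> nlinarith

lemma inner_calc (p g y : ℝ) (hp : p ∈ Set.Ioc (0:ℝ) 1)
    (hy : y ∈ Set.Icc (0:ℝ) 1) :
    ∫ w : ℝ × ℝ, (y + g * (if w.2 ≤ p then (1:ℝ) else 0) * ((if w.1 ≤ y then (1:ℝ) else 0) - y)) *
        (1 - (y + g * (if w.2 ≤ p then (1:ℝ) else 0) * ((if w.1 ≤ y then (1:ℝ) else 0) - y)))
        ∂(unif.prod unif)
      = (1 - p * g ^ 2) * (y * (1 - y)) := by
  have hkey : ∀ w : ℝ × ℝ,
      (y + g * (if w.2 ≤ p then (1:ℝ) else 0) * ((if w.1 ≤ y then (1:ℝ) else 0) - y)) *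
        (1 - (y + g * (if w.2 ≤ p then (1:ℝ) else 0) * ((if w.1 ≤ y then (1:ℝ) else 0) - y)))
      = (fun _ : ℝ => y * (1 - y)) w.1 * (fun _ : ℝ => (1:ℝ)) w.2 +
        (fun u : ℝ => ((g - g^2) * (1 - 2*y)) * (if u ≤ y then (1:ℝ) else 0) +
          (-(g * (y * (1 - 2*y))) - g^2 * y^2)) w.1 *
        (fun v : ℝ => if v ≤ p then (1:ℝ) else 0) w.2 := by
    intro w
    by_cases h1 : w.1 ≤ y <;> by_cases h2 : w.2 ≤ p <;> simp [h1, h2] <;> ring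
  simp_rw [hkey]
  have hF2 : Measurable (fun u : ℝ => ((g - g^2) * (1 - 2*y)) * (if u ≤ y then (1:ℝ) else 0) +
      (-(g * (y * (1 - 2*y))) - g^2 * y^2)) := by
    apply Measurable.add _ measurable_const
    apply Measurable.mul measurable_const
    exact Measurable.ite (measurableSet_le measurable_id measurable_const)
      measurable_const measurable_const
  have hG2 : Measurable (fun v : ℝ => if v ≤ p then (1:ℝ) else 0) :=
    Measurable.ite (measurableSet_le measurable_id measurable_const)
      measurable_const measurable_const
  have hintA : Integrable (fun w : ℝ × ℝ => (fun _ : ℝ => y * (1 - y)) w.1 *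
      (fun _ : ℝ => (1:ℝ)) w.2) (unif.prod unif) := by
    simp only [mul_one]
    exact integrable_const _
  have hBm : Measurable (fun w : ℝ × ℝ =>
      (fun u : ℝ => ((g - g^2) * (1 - 2*y)) * (if u ≤ y then (1:ℝ) else 0) +
        (-(g * (y * (1 - 2*y))) - g^2 * y^2)) w.1 *
      (fun v : ℝ => if v ≤ p then (1:ℝ) else 0) w.2) := by
    exact (hF2.comp measurable_fst).mul (hG2.comp measurable_snd)
  have hintB : Integrable (fun w : ℝ × ℝ =>
      (fun u : ℝ => ((g - g^2) * (1 - 2*y)) * (if u ≤ y then (1:ℝ) else 0) +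
        (-(g * (y * (1 - 2*y))) - g^2 * y^2)) w.1 *
      (fun v : ℝ => if v ≤ p then (1:ℝ) else 0) w.2) (unif.prod unif) := by
    apply bdd_integrable hBm.aestronglyMeasurable
      (C := (|(g - g^2) * (1 - 2*y)| + |(-(g * (y * (1 - 2*y))) - g^2 * y^2)|) * 1)
    apply Filter.Eventually.of_forall
    intro w
    simp only
    rw [abs_mul]
    apply mul_le_mul _ _ (abs_nonneg _) (by positivity)
    · apply (abs_add_le _ _).trans
      apply add_le_add_left
      rw [abs_mul]
      split <;> simp <;> positivity
    · split <;> simp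
  rw [integral_add hintA hintB,
    integral_prod_mul (f := fun _ : ℝ => y * (1 - y)) (g := fun _ : ℝ => (1:ℝ)),
    integral_prod_mul (f := fun u : ℝ => ((g - g^2) * (1 - 2*y)) * (if u ≤ y then (1:ℝ) else 0) +
        (-(g * (y * (1 - 2*y))) - g^2 * y^2)) (g := fun v : ℝ => if v ≤ p then (1:ℝ) else 0)]
  simp only [integral_const, probReal_univ, ENNReal.toReal_one, smul_eq_mul, one_mul, mul_one]
  rw [unif_ind p ⟨hp.1.le, hp.2⟩]
  have hind_int : Integrable
      (fun u : ℝ => ((g - g^2) * (1 - 2*y)) * (if u ≤ y then (1:ℝ) else 0)) unif := by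
    apply bdd_integrable (Measurable.aestronglyMeasurable (by
      exact Measurable.mul measurable_const (Measurable.ite
        (measurableSet_le measurable_id measurable_const) measurable_const measurable_const)))
      (C := |(g - g^2) * (1 - 2*y)|)
    apply Filter.Eventually.of_forall
    intro u
    rw [abs_mul]
    split <;> simp <;> positivity
  rw [integral_add hind_int (integrable_const _), integral_const_mul, unif_ind y hy]
  simp only [integral_const, probReal_univ, ENNReal.toReal_one, one_smul, smul_eq_mul, one_mul]
  ring

lemma step_lemma {Ω : Type*} [MeasurableSpace Ω] (μ : Measure Ω) [IsProbabilityMeasure μ]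
    (U V Y : Ω → ℝ) (p g : ℝ) (hp : p ∈ Set.Ioc (0:ℝ) 1) (hg : g ∈ Set.Ioo (0:ℝ) 1)
    (hU : Measurable U) (hV : Measurable V) (hY : Measurable Y)
    (hYr : ∀ ω, Y ω ∈ Set.Icc (0:ℝ) 1)
    (hUlaw : μ.map U = unif) (hVlaw : μ.map V = unif)
    (hUV : IndepFun U V μ)
    (hind : IndepFun Y (fun ω => (U ω, V ω)) μ) :
    ∫ ω, (Y ω + g * (if V ω ≤ p then (1:ℝ) else 0) * ((if U ω ≤ Y ω then (1:ℝ) else 0) - Y ω)) *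
        (1 - (Y ω + g * (if V ω ≤ p then (1:ℝ) else 0) *
          ((if U ω ≤ Y ω then (1:ℝ) else 0) - Y ω))) ∂μ
      = (1 - p * g ^ 2) * ∫ ω, Y ω * (1 - Y ω) ∂μ := by
  have hUVm : Measurable (fun ω => (U ω, V ω)) := hU.prodMk hV
  have hPi : μ.map (fun ω => (U ω, V ω)) = unif.prod unif := by
    rw [(indepFun_iff_map_prod_eq_prod_map_map hU.aemeasurable hV.aemeasurable).mp hUV,
      hUlaw, hVlaw]
  set ν : Measure ℝ := μ.map Y with hν
  have hνprob : IsProbabilityMeasure ν := Measure.isProbabilityMeasure_map hY.aemeasurable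
  have hT : Measurable (fun ω => (Y ω, (U ω, V ω))) := hY.prodMk hUVm
  have hjoint : μ.map (fun ω => (Y ω, (U ω, V ω))) = ν.prod (unif.prod unif) := by
    rw [(indepFun_iff_map_prod_eq_prod_map_map hY.aemeasurable hUVm.aemeasurable).mp hind, hPi]
  set f : ℝ × (ℝ × ℝ) → ℝ := fun z =>
    (z.1 + g * (if z.2.2 ≤ p then (1:ℝ) else 0) * ((if z.2.1 ≤ z.1 then (1:ℝ) else 0) - z.1)) *
      (1 - (z.1 + g * (if z.2.2 ≤ p then (1:ℝ) else 0) *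
        ((if z.2.1 ≤ z.1 then (1:ℝ) else 0) - z.1)))
    with hf
  have hmeas_b : Measurable (fun z : ℝ × (ℝ × ℝ) => if z.2.2 ≤ p then (1:ℝ) else 0) := by
    apply Measurable.ite _ measurable_const measurable_const
    exact measurableSet_le (measurable_snd.snd) measurable_const
  have hmeas_i : Measurable (fun z : ℝ × (ℝ × ℝ) => if z.2.1 ≤ z.1 then (1:ℝ) else 0) := by
    apply Measurable.ite _ measurable_const measurable_const
    exact measurableSet_le (measurable_snd.fst) measurable_fst
  have hmeasf : Measurable f := by
    apply Measurable.mul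
    · exact measurable_fst.add ((measurable_const.mul hmeas_b).mul (hmeas_i.sub measurable_fst))
    · exact measurable_const.sub
        (measurable_fst.add ((measurable_const.mul hmeas_b).mul (hmeas_i.sub measurable_fst)))
  have hνIcc : ν (Set.Icc (0:ℝ) 1)ᶜ = 0 := by
    rw [hν, Measure.map_apply hY measurableSet_Icc.compl]
    have : Y ⁻¹' (Set.Icc (0:ℝ) 1)ᶜ = ∅ := by
      ext ω; simp [hYr ω]
    simp [this]
  have haeν : ∀ᵐ y ∂ν, y ∈ Set.Icc (0:ℝ) 1 := by
    rw [ae_iff]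
    exact hνIcc
  have hae : ∀ᵐ z ∂(ν.prod (unif.prod unif)), z.1 ∈ Set.Icc (0:ℝ) 1 := by
    have h0 : (ν.prod (unif.prod unif)) {z : ℝ × (ℝ × ℝ) | z.1 ∉ Set.Icc (0:ℝ) 1} = 0 := by
      have hset : {z : ℝ × (ℝ × ℝ) | z.1 ∉ Set.Icc (0:ℝ) 1} =
          (Set.Icc (0:ℝ) 1)ᶜ ×ˢ (Set.univ : Set (ℝ × ℝ)) := by
        ext z; simp [Set.mem_prod]
      rw [hset, Measure.prod_prod, hνIcc]
      simp
    rw [ae_iff]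
    exact h0
  have hbdd : ∀ᵐ z ∂(ν.prod (unif.prod unif)), |f z| ≤ 1 := by
    filter_upwards [hae] with z hz
    have hbi : (if z.2.2 ≤ p then (1:ℝ) else 0) = 0 ∨ (if z.2.2 ≤ p then (1:ℝ) else 0) = 1 := by
      split <;> simp
    have hii : (if z.2.1 ≤ z.1 then (1:ℝ) else 0) = 0 ∨
        (if z.2.1 ≤ z.1 then (1:ℝ) else 0) = 1 := by
      split <;> simp
    obtain ⟨h0, h1⟩ := next_mem z.1 g _ _ hz hg hbi hii
    rw [hf]
    simp only
    rw [abs_le]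
    constructor <;> nlinarith
  have hint : Integrable f (ν.prod (unif.prod unif)) :=
    bdd_integrable hmeasf.aestronglyMeasurable hbdd
  have lhs_eq : ∫ ω, f (Y ω, (U ω, V ω)) ∂μ = ∫ z, f z ∂(ν.prod (unif.prod unif)) := by
    rw [← hjoint, integral_map hT.aemeasurable]
    rw [hjoint]
    exact hmeasf.aestronglyMeasurable
  have rhs_eq : ∫ ω, Y ω * (1 - Y ω) ∂μ = ∫ y, y * (1 - y) ∂ν := by
    rw [hν, integral_map hY.aemeasurable]
    exact (measurable_id.mul (measurable_const.sub measurable_id)).aestronglyMeasurable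
  calc ∫ ω, (Y ω + g * (if V ω ≤ p then (1:ℝ) else 0) *
          ((if U ω ≤ Y ω then (1:ℝ) else 0) - Y ω)) *
        (1 - (Y ω + g * (if V ω ≤ p then (1:ℝ) else 0) *
          ((if U ω ≤ Y ω then (1:ℝ) else 0) - Y ω))) ∂μ
      = ∫ ω, f (Y ω, (U ω, V ω)) ∂μ := rfl
    _ = ∫ z, f z ∂(ν.prod (unif.prod unif)) := lhs_eq
    _ = ∫ y, ∫ w, f (y, w) ∂(unif.prod unif) ∂ν := integral_prod f hint
    _ = ∫ y, (1 - p * g ^ 2) * (y * (1 - y)) ∂ν := by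
        apply integral_congr_ae
        filter_upwards [haeν] with y hy
        exact inner_calc p g y hp hy
    _ = (1 - p * g ^ 2) * ∫ y, y * (1 - y) ∂ν := integral_const_mul _ _
    _ = (1 - p * g ^ 2) * ∫ ω, Y ω * (1 - Y ω) ∂μ := by rw [rhs_eq]

noncomputable section

def Wfun {Ω : Type*} (U V : ℕ → Ω → ℝ) (i : ℕ) (ω : Ω) : ℝ × ℝ :=
  if i = 0 then ((0:ℝ), (0:ℝ)) else (U i ω, V i ω)

def Gfun (γ : ℕ → ℝ) (p x : ℝ) : ℕ → (ℕ → ℝ × ℝ) → ℝ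
  | 0 => fun _ => x
  | (n+1) => fun w => Gfun γ p x n w + γ (n+1) * (if (w (n+1)).2 ≤ p then (1:ℝ) else 0) *
      ((if (w (n+1)).1 ≤ Gfun γ p x n w then (1:ℝ) else 0) - Gfun γ p x n w)

lemma Gfun_meas (γ : ℕ → ℝ) (p x : ℝ) (n : ℕ) : Measurable (Gfun γ p x n) := by
  induction n with
  | zero => exact measurable_const
  | succ n ih =>
    show Measurable (fun w => Gfun γ p x n w + γ (n+1) *
      (if (w (n+1)).2 ≤ p then (1:ℝ) else 0) *
      ((if (w (n+1)).1 ≤ Gfun γ p x n w then (1:ℝ) else 0) - Gfun γ p x n w))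
    have h1 : Measurable (fun w : ℕ → ℝ × ℝ => if (w (n+1)).2 ≤ p then (1:ℝ) else 0) :=
      Measurable.ite (measurableSet_le (measurable_pi_apply (n+1)).snd measurable_const)
        measurable_const measurable_const
    have h2 : Measurable (fun w : ℕ → ℝ × ℝ =>
        if (w (n+1)).1 ≤ Gfun γ p x n w then (1:ℝ) else 0) :=
      Measurable.ite (measurableSet_le (measurable_pi_apply (n+1)).fst ih)
        measurable_const measurable_const
    exact ih.add ((measurable_const.mul h1).mul (h2.sub ih))

lemma Gfun_local (γ : ℕ → ℝ) (p x : ℝ) : ∀ (n : ℕ) (w w' : ℕ → ℝ × ℝ),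
    (∀ k, 1 ≤ k → k ≤ n → w k = w' k) → Gfun γ p x n w = Gfun γ p x n w' := by
  intro n
  induction n with
  | zero => intro w w' _; rfl
  | succ n ih =>
    intro w w' h
    show Gfun γ p x n w + _ = Gfun γ p x n w' + _
    rw [ih w w' (fun k hk1 hk2 => h k hk1 (hk2.trans (Nat.le_succ n))),
      h (n+1) (by omega) (by omega)]

lemma Wfun_iIndep {Ω : Type*} [MeasurableSpace Ω] {μ : Measure Ω} [IsProbabilityMeasure μ]
    (U V : ℕ → Ω → ℝ)
    (hiid : iIndepFun
      (fun n ω => (U n ω, V n ω)) μ) :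
    iIndepFun (Wfun U V) μ := by
  rw [iIndepFun_iff] at hiid ⊢
  have hcomap : ∀ i, i ≠ 0 → (MeasurableSpace.comap (Wfun U V i)
      (inferInstance : MeasurableSpace (ℝ × ℝ))) =
      MeasurableSpace.comap (fun ω => (U i ω, V i ω)) inferInstance := by
    intro i hi
    congr 1
    funext ω
    simp [Wfun, hi]
  intro s f' hf'
  by_cases h0 : 0 ∈ s
  · obtain ⟨t, -, ht⟩ := hf' 0 h0
    by_cases hmem : ((0:ℝ), (0:ℝ)) ∈ t
    · have huniv : f' 0 = Set.univ := by
        rw [← ht]; ext ω; simpa [Wfun] using hmem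
      rw [← Finset.insert_erase h0, Finset.set_biInter_insert,
        Finset.prod_insert (Finset.notMem_erase _ _), huniv, Set.univ_inter, measure_univ,
        one_mul]
      apply hiid
      intro i hi
      rw [← hcomap i (Finset.ne_of_mem_erase hi)]
      exact hf' i (Finset.mem_of_mem_erase hi)
    · have hempty : f' 0 = ∅ := by
        rw [← ht]; ext ω; simpa [Wfun] using hmem
      have hsub : ⋂ i ∈ s, f' i ⊆ f' 0 := Set.biInter_subset_of_mem h0
      have hz : μ (⋂ i ∈ s, f' i) = 0 :=
        le_antisymm ((measure_mono hsub).trans (by rw [hempty]; simp)) zero_le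
      rw [hz, Finset.prod_eq_zero h0 (by rw [hempty]; exact measure_empty)]
  · apply hiid
    intro i hi
    rw [← hcomap i (fun h => h0 (h ▸ hi))]
    exact hf' i hi

lemma X_eq_G {Ω : Type*} (U V : ℕ → Ω → ℝ) (γ : ℕ → ℝ) (p x : ℝ)
    (X : ℕ → Ω → ℝ) (hX0 : ∀ ω, X 0 ω = x)
    (hrec : ∀ n ω, X (n + 1) ω = X n ω + γ (n + 1) *
      ({ω' | V (n + 1) ω' ≤ p}.indicator (1 : Ω → ℝ) ω) *
      ({ω' | U (n + 1) ω' ≤ X n ω'}.indicator (1 : Ω → ℝ) ω - X n ω)) :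
    ∀ n ω, X n ω = Gfun γ p x n (fun k => Wfun U V k ω) := by
  intro n
  induction n with
  | zero => intro ω; rw [hX0]; rfl
  | succ n ih =>
    intro ω
    rw [hrec n ω]
    show _ = Gfun γ p x n _ + γ (n+1) * (if (Wfun U V (n+1) ω).2 ≤ p then (1:ℝ) else 0) *
      ((if (Wfun U V (n+1) ω).1 ≤ Gfun γ p x n (fun k => Wfun U V k ω) then (1:ℝ) else 0) -
        Gfun γ p x n (fun k => Wfun U V k ω))
    rw [← ih ω]
    have hW : Wfun U V (n+1) ω = (U (n+1) ω, V (n+1) ω) := by simp [Wfun]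
    rw [hW]
    simp only [Set.indicator_apply, Set.mem_setOf_eq, Pi.one_apply]

lemma X_indep {Ω : Type*} [MeasurableSpace Ω] (μ : Measure Ω) [IsProbabilityMeasure μ]
    (U V : ℕ → Ω → ℝ) (γ : ℕ → ℝ) (p x : ℝ)
    (hU : ∀ n ≥ 1, Measurable (U n)) (hV : ∀ n ≥ 1, Measurable (V n))
    (hiid : iIndepFun
      (fun n ω => (U n ω, V n ω)) μ)
    (X : ℕ → Ω → ℝ) (hX0 : ∀ ω, X 0 ω = x)
    (hrec : ∀ n ω, X (n + 1) ω = X n ω + γ (n + 1) *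
      ({ω' | V (n + 1) ω' ≤ p}.indicator (1 : Ω → ℝ) ω) *
      ({ω' | U (n + 1) ω' ≤ X n ω'}.indicator (1 : Ω → ℝ) ω - X n ω)) (n : ℕ) :
    IndepFun (X n) (fun ω => (U (n+1) ω, V (n+1) ω)) μ := by
  have hWm : ∀ i, Measurable (Wfun U V i) := by
    intro i
    rcases Nat.eq_zero_or_pos i with h | h
    · subst h
      have : Wfun U V 0 = fun _ => ((0:ℝ), (0:ℝ)) := by funext ω; simp [Wfun]
      rw [this]; exact measurable_const
    · have h1 : i ≠ 0 := by omega
      have : Wfun U V i = fun ω => (U i ω, V i ω) := by funext ω; simp [Wfun, h1]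
      rw [this]
      exact (hU i h).prodMk (hV i h)
  have hfin := (Wfun_iIndep U V hiid).indepFun_finset (Finset.Icc 1 n) {n+1}
    (by
      rw [Finset.disjoint_left]
      intro a ha1 ha2
      simp only [Finset.mem_Icc] at ha1
      simp only [Finset.mem_singleton] at ha2
      omega) hWm
  set φ : ({i // i ∈ Finset.Icc 1 n} → ℝ × ℝ) → ℝ := fun v =>
    Gfun γ p x n (fun k => if h : k ∈ Finset.Icc 1 n then v ⟨k, h⟩ else 0) with hφdef
  have hφ : Measurable φ := by
    apply (Gfun_meas γ p x n).comp
    apply measurable_pi_lambda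
    intro k
    by_cases h : k ∈ Finset.Icc 1 n
    · simp only [dif_pos h]; exact measurable_pi_apply _
    · simp only [dif_neg h]; exact measurable_const
  set ψ : ({i // i ∈ ({n+1} : Finset ℕ)} → ℝ × ℝ) → ℝ × ℝ := fun v =>
    v ⟨n+1, Finset.mem_singleton_self _⟩ with hψdef
  have hψ : Measurable ψ := measurable_pi_apply _
  have h := hfin.comp hφ hψ
  have e1 : φ ∘ (fun a (i : {x // x ∈ Finset.Icc 1 n}) => Wfun U V i a) = X n := by
    funext ω
    show Gfun γ p x n (fun k => if h : k ∈ Finset.Icc 1 n then Wfun U V k ω else 0) = X n ω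
    rw [X_eq_G U V γ p x X hX0 hrec n ω]
    apply Gfun_local
    intro k hk1 hk2
    rw [dif_pos (Finset.mem_Icc.mpr ⟨hk1, hk2⟩)]
  have e2 : ψ ∘ (fun a (i : {x // x ∈ ({n+1} : Finset ℕ)}) => Wfun U V i a) =
      fun ω => (U (n+1) ω, V (n+1) ω) := by
    funext ω
    show Wfun U V (n+1) ω = _
    simp [Wfun]
  rw [e1, e2] at h
  exact h
end

theorem stmt10 (Ω : Type*) [MeasurableSpace Ω] (μ : Measure Ω) [IsProbabilityMeasure μ]
    (U V : ℕ → Ω → ℝ) (γ : ℕ → ℝ) (p x : ℝ)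
    (hp : p ∈ Set.Ioc (0:ℝ) 1) (hx : x ∈ Set.Ioo (0:ℝ) 1)
    (hγ : ∀ n ≥ 1, γ n ∈ Set.Ioo (0:ℝ) 1)
    (hU : ∀ n ≥ 1, Measurable (U n)) (hV : ∀ n ≥ 1, Measurable (V n))
    (hUlaw : ∀ n ≥ 1, μ.map (U n) = volume.restrict (Set.Icc (0:ℝ) 1))
    (hVlaw : ∀ n ≥ 1, μ.map (V n) = volume.restrict (Set.Icc (0:ℝ) 1))
    (hiid : iIndepFun
      (fun n ω => (U n ω, V n ω)) μ)
    (hUV : ∀ n ≥ 1, IndepFun (U n) (V n) μ)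
    (X : ℕ → Ω → ℝ) (hX0 : ∀ ω, X 0 ω = x)
    (hrec : ∀ n ω, X (n + 1) ω = X n ω + γ (n + 1) *
      ({ω' | V (n + 1) ω' ≤ p}.indicator (1 : Ω → ℝ) ω) *
      ({ω' | U (n + 1) ω' ≤ X n ω'}.indicator (1 : Ω → ℝ) ω - X n ω)) :
    ∀ n ≥ 1, ∫ ω, X n ω * (1 - X n ω) ∂μ
      = x * (1 - x) * ∏ k ∈ Finset.Icc 1 n, (1 - p * (γ k) ^ 2) := by
  have hXmeas : ∀ n, Measurable (X n) := by
    intro n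
    induction n with
    | zero =>
      have : X 0 = fun _ => x := funext hX0
      rw [this]; exact measurable_const
    | succ n ih =>
      have hXe : X (n+1) = fun ω => X n ω + γ (n + 1) *
          ({ω' | V (n + 1) ω' ≤ p}.indicator (1 : Ω → ℝ) ω) *
          ({ω' | U (n + 1) ω' ≤ X n ω'}.indicator (1 : Ω → ℝ) ω - X n ω) := funext (hrec n)
      rw [hXe]
      have h1 : Measurable ({ω' | V (n + 1) ω' ≤ p}.indicator (1 : Ω → ℝ)) :=
        measurable_one.indicator (measurableSet_le (hV (n+1) (by omega)) measurable_const)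
      have h2 : Measurable ({ω' | U (n + 1) ω' ≤ X n ω'}.indicator (1 : Ω → ℝ)) :=
        measurable_one.indicator (measurableSet_le (hU (n+1) (by omega)) ih)
      exact ih.add ((measurable_const.mul h1).mul (h2.sub ih))
  have hXr : ∀ n ω, X n ω ∈ Set.Icc (0:ℝ) 1 := by
    intro n
    induction n with
    | zero => intro ω; rw [hX0]; exact ⟨hx.1.le, hx.2.le⟩
    | succ n ih =>
      intro ω
      rw [hrec n ω]
      simp only [Set.indicator_apply, Set.mem_setOf_eq, Pi.one_apply]
      exact next_mem _ _ _ _ (ih ω) (hγ (n+1) (by omega)) (by split <;> simp)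
        (by split <;> simp)
  have key : ∀ m, ∫ ω, X m ω * (1 - X m ω) ∂μ
      = x * (1 - x) * ∏ k ∈ Finset.Icc 1 m, (1 - p * (γ k) ^ 2) := by
    intro m
    induction m with
    | zero =>
      have hXe : (fun ω => X 0 ω * (1 - X 0 ω)) = fun _ => x * (1 - x) :=
        funext fun ω => by rw [hX0]
      rw [hXe, integral_const, Finset.Icc_eq_empty (by omega), Finset.prod_empty, mul_one]
      simp
    | succ m ih =>
      simp_rw [hrec m]
      simp only [Set.indicator_apply, Set.mem_setOf_eq, Pi.one_apply]
      rw [step_lemma μ (U (m+1)) (V (m+1)) (X m) p (γ (m+1)) hp (hγ (m+1) (by omega))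
        (hU (m+1) (by omega)) (hV (m+1) (by omega)) (hXmeas m) (hXr m)
        ((hUlaw (m+1) (by omega)).trans rfl) ((hVlaw (m+1) (by omega)).trans rfl)
        (hUV (m+1) (by omega))
        (X_indep μ U V γ p x hU hV hiid X hX0 hrec m)]
      rw [ih, Finset.prod_Icc_succ_top (by omega : 1 ≤ m + 1)]
      ring
  intro n _
  exact key n
end

section
/- If $0<p_B<p_A\le1$ and $x\in(0,1)$, then the two-armed bandit process $(X_n)$ started at $x$ is a bounded submartingale converging a.s. to a random variable $X_\infty$ with values in $\{0,1\}$, and $\mathbb{P}_x(X_\infty=1) = x + \pi\sum_{n\ge0}\gamma_{n+1}\mathbb{E}_x[X_n(1-X_n)] > x$, where $\pi=p_A-p_B$. -/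
open MeasureTheory ProbabilityTheory Filter Set

section Aux

variable {Ω : Type*} {mΩ : MeasurableSpace Ω} {μ : Measure Ω}

lemma bandit_iIndep_mono {ι : Type*} {m m' : ι → MeasurableSpace Ω}
    (h : iIndep m μ) (hle : ∀ i, m' i ≤ m i) : iIndep m' μ := by
  rw [iIndep_iff] at h ⊢
  intro s f hf
  exact h s fun i hi => hle i _ (hf i hi)

lemma bandit_ind_one_iff (S : Set Ω) (ω : Ω) :
    S.indicator (1 : Ω → ℝ) ω = 1 ↔ ω ∈ S := by
  by_cases h : ω ∈ S <;> simp [Set.indicator_apply, h]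

lemma bandit_ind_preimage_one (S : Set Ω) :
    (S.indicator (1 : Ω → ℝ)) ⁻¹' {1} = S := by
  ext ω; simpa using bandit_ind_one_iff S ω

lemma bandit_ind_mem (S : Set Ω) (ω : Ω) :
    S.indicator (1 : Ω → ℝ) ω ∈ Set.Icc (0:ℝ) 1 := by
  by_cases h : ω ∈ S <;> simp [Set.indicator_apply, h]


lemma bandit_ind_zero_or_one (S : Set Ω) (ω : Ω) :
    S.indicator (1 : Ω → ℝ) ω = 0 ∨ S.indicator (1 : Ω → ℝ) ω = 1 := by
  by_cases h : ω ∈ S <;> simp [Set.indicator_apply, h]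


lemma bandit_step_mem {c g a b : ℝ} (hc0 : 0 ≤ c) (hc1 : c ≤ 1) (hg0 : 0 ≤ g) (hg1 : g ≤ 1)
    (ha0 : 0 ≤ a) (ha1 : a ≤ 1) (hb0 : 0 ≤ b) (hb1 : b ≤ 1) :
    c + g * ((1-c)*a - c*b) ∈ Set.Icc (0:ℝ) 1 := by
  constructor
  · have h1 : 0 ≤ g * ((1-c)*a) := mul_nonneg hg0 (mul_nonneg (by linarith) ha0)
    have h2 : g * (c*b) ≤ c * 1 := by
      have : g * b ≤ 1 := mul_le_one₀ hg1 hb0 hb1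
      nlinarith
    nlinarith
  · have h3 : 0 ≤ g * (c*b) := mul_nonneg hg0 (mul_nonneg hc0 hb0)
    have h4 : g * ((1-c)*a) ≤ 1 - c := by
      have : g * a ≤ 1 := mul_le_one₀ hg1 ha0 ha1
      nlinarith
    nlinarith


lemma bandit_collapse {Ω : Type*} {X : Ω → ℝ} (s : Finset ℝ) (ω : Ω) (hX : X ω ∈ s)
    (F : ℝ → ℝ) :
    ∑ c ∈ s, ({ω' | X ω' = c}).indicator (1:Ω→ℝ) ω * F c = F (X ω) := by
  have hterm : ∀ c : ℝ, ({ω' | X ω' = c}).indicator (1:Ω→ℝ) ω * F c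
      = if X ω = c then F c else 0 := by
    intro c
    by_cases h : X ω = c <;> simp [Set.indicator_apply, Set.mem_setOf_eq, h]
  rw [Finset.sum_congr rfl fun c _ => hterm c, Finset.sum_ite_eq s (X ω) F, if_pos hX]


lemma bandit_ind_congr {Ω : Type*} {S T : Set Ω} {ω : Ω} (h : ω ∈ S ↔ ω ∈ T) :
    S.indicator (1:Ω→ℝ) ω = T.indicator (1:Ω→ℝ) ω := by
  by_cases hm : ω ∈ S
  · rw [Set.indicator_of_mem hm, Set.indicator_of_mem (h.1 hm)]
  · rw [Set.indicator_of_notMem hm, Set.indicator_of_notMem (fun hT => hm (h.2 hT))]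

lemma bandit_pullout [IsProbabilityMeasure μ]
    {m m₁ : MeasurableSpace Ω} (hm : m ≤ mΩ) (hm₁ : m₁ ≤ mΩ)
    (hindep : Indep m₁ m μ) {t : Set Ω} (ht : MeasurableSet[m] t)
    {g : Ω → ℝ} (hg : StronglyMeasurable[m₁] g) {C : ℝ} (hgbd : ∀ ω, |g ω| ≤ C) :
    μ[fun ω => t.indicator (1:Ω→ℝ) ω * g ω | m]
      =ᵐ[μ] fun ω => t.indicator (1:Ω→ℝ) ω * ∫ y, g y ∂μ := by
  haveI : SigmaFinite (μ.trim hm) := by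
    exact sigmaFiniteTrim_mono _ le_rfl
  have hgm : AEStronglyMeasurable[mΩ] g μ := (hg.mono hm₁).aestronglyMeasurable
  have hgint : Integrable g μ :=
    Integrable.mono' (integrable_const C) hgm (Eventually.of_forall fun ω => by
      simpa using hgbd ω)
  have hindm : StronglyMeasurable[m] (t.indicator (1 : Ω → ℝ)) :=
    stronglyMeasurable_one.indicator ht
  have hprod : Integrable (t.indicator (1:Ω→ℝ) * g) μ := by
    refine Integrable.mono' (integrable_const (|C|)) ((hindm.mono hm).aestronglyMeasurable.mul hgm)
      (Eventually.of_forall fun ω => ?_)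
    have h1 := bandit_ind_mem t ω
    have h2 := hgbd ω
    have : ‖t.indicator (1:Ω→ℝ) ω * g ω‖ = t.indicator (1:Ω→ℝ) ω * |g ω| := by
      rw [norm_mul, Real.norm_eq_abs, Real.norm_eq_abs, abs_of_nonneg h1.1]
    rw [Pi.mul_apply, this]
    calc t.indicator (1:Ω→ℝ) ω * |g ω| ≤ 1 * |C| := by
          apply mul_le_mul h1.2 (h2.trans (le_abs_self C)) (abs_nonneg _) zero_le_one
      _ = |C| := one_mul _
  have h1 : μ[t.indicator (1:Ω→ℝ) * g | m] =ᵐ[μ] t.indicator (1:Ω→ℝ) * μ[g|m] :=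
    condExp_mul_of_stronglyMeasurable_left hindm hprod hgint
  have h2 : μ[g|m] =ᵐ[μ] fun _ => ∫ y, g y ∂μ := condExp_indep_eq hm₁ hm hg hindep
  have : μ[fun ω => t.indicator (1:Ω→ℝ) ω * g ω | m] = μ[t.indicator (1:Ω→ℝ) * g | m] := rfl
  rw [this]
  filter_upwards [h1, h2] with ω hω1 hω2
  rw [hω1, Pi.mul_apply, hω2]

end Aux

theorem stmt12 (Ω : Type*) [mΩ : MeasurableSpace Ω] (μ : Measure Ω) [IsProbabilityMeasure μ]
    (U : ℕ → Ω → ℝ) (A B : ℕ → Set Ω) (γ : ℕ → ℝ) (x : ℝ) (hx : x ∈ Set.Ioo (0:ℝ) 1)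
    (pA pB π : ℝ) (hord : 0 < pB ∧ pB < pA ∧ pA ≤ 1) (hπ : π = pA - pB)
    (hpA : ∀ n ≥ 1, μ (A n) = ENNReal.ofReal pA)
    (hpB : ∀ n ≥ 1, μ (B n) = ENNReal.ofReal pB)
    (hγ : ∀ n ≥ 1, γ n ∈ Set.Ioo (0:ℝ) 1)
    (hΓdiv : Filter.Tendsto (fun n => ∑ k ∈ Finset.Icc 1 n, γ k) atTop atTop)
    (hA : ∀ n ≥ 1, MeasurableSet (A n)) (hB : ∀ n ≥ 1, MeasurableSet (B n))
    (hU : ∀ n ≥ 1, Measurable (U n))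
    (hUlaw : ∀ n ≥ 1, μ.map (U n) = volume.restrict (Set.Icc (0:ℝ) 1))
    (hiid : iIndepFun (m := fun _ : ℕ => (inferInstance : MeasurableSpace (ℝ × ℝ × ℝ)))
      (fun n ω => (U n ω, (A n).indicator (1 : Ω → ℝ) ω, (B n).indicator (1 : Ω → ℝ) ω)) μ)
    (hident : ∀ n ≥ 1,
      IdentDistrib (fun ω => ((A n).indicator (1 : Ω → ℝ) ω, (B n).indicator (1 : Ω → ℝ) ω))
        (fun ω => ((A 1).indicator (1 : Ω → ℝ) ω, (B 1).indicator (1 : Ω → ℝ) ω)) μ μ)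
    (hindep : IndepFun (fun ω (n : ℕ) => U n ω)
      (fun ω (n : ℕ) => ((A n).indicator (1 : Ω → ℝ) ω, (B n).indicator (1 : Ω → ℝ) ω)) μ)
    (X : ℕ → Ω → ℝ) (hX0 : ∀ ω, X 0 ω = x)
    (hrec : ∀ n ω, X (n + 1) ω = X n ω + γ (n + 1) *
      ((1 - X n ω) * ({ω' | U (n + 1) ω' ≤ X n ω'} ∩ A (n + 1)).indicator (1 : Ω → ℝ) ω
        - X n ω * ({ω' | X n ω' < U (n + 1) ω'} ∩ B (n + 1)).indicator (1 : Ω → ℝ) ω))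
    (ℱ : Filtration ℕ mΩ)
    (hℱ : ∀ n, (ℱ n : MeasurableSpace Ω) = ⨆ k ∈ Finset.Icc 1 n,
      (MeasurableSpace.comap (U k) inferInstance
        ⊔ MeasurableSpace.comap ((A k).indicator (1 : Ω → ℝ)) inferInstance
        ⊔ MeasurableSpace.comap ((B k).indicator (1 : Ω → ℝ)) inferInstance)) :
    Submartingale X ℱ μ ∧ (∀ n ω, X n ω ∈ Set.Icc (0:ℝ) 1) ∧
      ∃ Xinf : Ω → ℝ,
        (∀ᵐ ω ∂μ, Filter.Tendsto (fun n => X n ω) atTop (nhds (Xinf ω))) ∧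
        (∀ᵐ ω ∂μ, Xinf ω = 0 ∨ Xinf ω = 1) ∧
        μ {ω | Xinf ω = 1}
          = ENNReal.ofReal (x + π * ∑' n : ℕ, γ (n + 1) * ∫ ω, X n ω * (1 - X n ω) ∂μ) ∧
        ENNReal.ofReal x < μ {ω | Xinf ω = 1} := by
  classical
  obtain ⟨hpB0, hpBA, hpA1⟩ := hord
  have hπpos : 0 < π := by rw [hπ]; linarith
  have hpApos : 0 < pA := lt_trans hpB0 hpBA
  -- range in [0,1]
  have hrange : ∀ n ω, X n ω ∈ Set.Icc (0:ℝ) 1 := by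
    intro n
    induction n with
    | zero => intro ω; rw [hX0]; exact ⟨hx.1.le, hx.2.le⟩
    | succ n ih =>
      intro ω
      have hγn := hγ (n+1) (by omega)
      obtain ⟨hc0, hc1⟩ := ih ω
      obtain ⟨hiA0, hiA1⟩ := bandit_ind_mem ({ω' | U (n + 1) ω' ≤ X n ω'} ∩ A (n + 1)) ω
      obtain ⟨hiB0, hiB1⟩ := bandit_ind_mem ({ω' | X n ω' < U (n + 1) ω'} ∩ B (n + 1)) ω
      rw [hrec n ω]
      exact bandit_step_mem hc0 hc1 hγn.1.le hγn.2.le hiA0 hiA1 hiB0 hiB1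
  -- finite range
  have hfin : ∀ n, ∃ s : Finset ℝ, (∀ c ∈ s, c ∈ Set.Icc (0:ℝ) 1) ∧ ∀ ω, X n ω ∈ s := by
    intro n
    induction n with
    | zero =>
      refine ⟨{x}, ?_, fun ω => by simp [hX0]⟩
      intro c hc
      rw [Finset.mem_singleton] at hc
      subst hc; exact ⟨hx.1.le, hx.2.le⟩
    | succ n ih =>
      obtain ⟨s, hs01, hscov⟩ := ih
      refine ⟨((s.image fun c => c + γ (n+1) * ((1-c)*1 - c*0)) ∪
              (s.image fun c => c + γ (n+1) * ((1-c)*0 - c*1)) ∪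
              (s.image fun c => c + γ (n+1) * ((1-c)*1 - c*1)) ∪
              (s.image fun c => c + γ (n+1) * ((1-c)*0 - c*0))).filter
                (fun c => 0 ≤ c ∧ c ≤ 1), ?_, ?_⟩
      · intro c hc
        rw [Finset.mem_filter] at hc
        exact ⟨hc.2.1, hc.2.2⟩
      · intro ω
        rw [Finset.mem_filter]
        refine ⟨?_, (hrange (n+1) ω).1, (hrange (n+1) ω).2⟩
        have hiA := bandit_ind_mem ({ω' | U (n + 1) ω' ≤ X n ω'} ∩ A (n + 1)) ω
        have hiB := bandit_ind_mem ({ω' | X n ω' < U (n + 1) ω'} ∩ B (n + 1)) ω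
        simp only [Finset.mem_union, Finset.mem_image]
        rcases bandit_ind_zero_or_one ({ω' | U (n + 1) ω' ≤ X n ω'} ∩ A (n + 1)) ω with h1 | h1 <;>
          rcases bandit_ind_zero_or_one ({ω' | X n ω' < U (n + 1) ω'} ∩ B (n + 1)) ω with h2 | h2
        · exact Or.inr ⟨X n ω, hscov ω, by rw [hrec n ω, h1, h2]⟩
        · exact Or.inl (Or.inl (Or.inr ⟨X n ω, hscov ω, by rw [hrec n ω, h1, h2]⟩))
        · exact Or.inl (Or.inl (Or.inl ⟨X n ω, hscov ω, by rw [hrec n ω, h1, h2]⟩))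
        · exact Or.inl (Or.inr ⟨X n ω, hscov ω, by rw [hrec n ω, h1, h2]⟩)
    -- filtration facts
  have hcomapU : ∀ n k, 1 ≤ k → k ≤ n → MeasurableSpace.comap (U k) inferInstance ≤ ℱ n := by
    intro n k hk1 hkn
    rw [hℱ n]
    exact le_trans (le_trans le_sup_left le_sup_left)
      (le_biSup (fun k => MeasurableSpace.comap (U k) inferInstance
        ⊔ MeasurableSpace.comap ((A k).indicator (1:Ω→ℝ)) inferInstance
        ⊔ MeasurableSpace.comap ((B k).indicator (1:Ω→ℝ)) inferInstance) (Finset.mem_Icc.2 ⟨hk1, hkn⟩))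
  have hcomapA : ∀ n k, 1 ≤ k → k ≤ n →
      MeasurableSpace.comap ((A k).indicator (1:Ω→ℝ)) inferInstance ≤ ℱ n := by
    intro n k hk1 hkn
    rw [hℱ n]
    exact le_trans (le_trans le_sup_right le_sup_left)
      (le_biSup (fun k => MeasurableSpace.comap (U k) inferInstance
        ⊔ MeasurableSpace.comap ((A k).indicator (1:Ω→ℝ)) inferInstance
        ⊔ MeasurableSpace.comap ((B k).indicator (1:Ω→ℝ)) inferInstance) (Finset.mem_Icc.2 ⟨hk1, hkn⟩))
  have hcomapB : ∀ n k, 1 ≤ k → k ≤ n →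
      MeasurableSpace.comap ((B k).indicator (1:Ω→ℝ)) inferInstance ≤ ℱ n := by
    intro n k hk1 hkn
    rw [hℱ n]
    exact le_trans le_sup_right
      (le_biSup (fun k => MeasurableSpace.comap (U k) inferInstance
        ⊔ MeasurableSpace.comap ((A k).indicator (1:Ω→ℝ)) inferInstance
        ⊔ MeasurableSpace.comap ((B k).indicator (1:Ω→ℝ)) inferInstance) (Finset.mem_Icc.2 ⟨hk1, hkn⟩))
  have hUme : ∀ n k, 1 ≤ k → k ≤ n → Measurable[ℱ n] (U k) := fun n k h1 h2 =>
    measurable_iff_comap_le.2 (hcomapU n k h1 h2)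
  have hAmem : ∀ n k, 1 ≤ k → k ≤ n → MeasurableSet[ℱ n] (A k) := by
    intro n k h1 h2
    exact hcomapA n k h1 h2 _ ⟨{1}, measurableSet_singleton 1, bandit_ind_preimage_one _⟩
  have hBmem : ∀ n k, 1 ≤ k → k ≤ n → MeasurableSet[ℱ n] (B k) := by
    intro n k h1 h2
    exact hcomapB n k h1 h2 _ ⟨{1}, measurableSet_singleton 1, bandit_ind_preimage_one _⟩
  -- adaptedness
  have hadp : ∀ n, StronglyMeasurable[ℱ n] (X n) := by
    intro n
    induction n with
    | zero =>
      have : X 0 = fun _ => x := funext hX0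
      rw [this]; exact stronglyMeasurable_const
    | succ n ih =>
      have hXn : Measurable[ℱ (n+1)] (X n) :=
        (ih.mono (ℱ.mono (Nat.le_succ n))).measurable
      have hU' : Measurable[ℱ (n+1)] (U (n+1)) := hUme (n+1) (n+1) (by omega) le_rfl
      have hSA : MeasurableSet[ℱ (n+1)] ({ω' | U (n + 1) ω' ≤ X n ω'} ∩ A (n + 1)) :=
        MeasurableSet.inter (measurableSet_le hU' hXn) (hAmem (n+1) (n+1) (by omega) le_rfl)
      have hSB : MeasurableSet[ℱ (n+1)] ({ω' | X n ω' < U (n + 1) ω'} ∩ B (n + 1)) :=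
        MeasurableSet.inter (measurableSet_lt hXn hU') (hBmem (n+1) (n+1) (by omega) le_rfl)
      have hXr : X (n+1) = fun ω => X n ω + γ (n + 1) *
          ((1 - X n ω) * ({ω' | U (n + 1) ω' ≤ X n ω'} ∩ A (n + 1)).indicator (1:Ω→ℝ) ω
            - X n ω * ({ω' | X n ω' < U (n + 1) ω'} ∩ B (n + 1)).indicator (1:Ω→ℝ) ω) :=
        funext (hrec n)
      rw [hXr]
      exact (hXn.add (measurable_const.mul (((measurable_const.sub hXn).mul
        (measurable_const.indicator hSA)).sub
          (hXn.mul (measurable_const.indicator hSB))))).stronglyMeasurable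
  have hXm : ∀ n, Measurable (X n) := fun n => ((hadp n).mono (ℱ.le n)).measurable
  have hXnorm : ∀ n ω, ‖X n ω‖ ≤ 1 := by
    intro n ω
    rw [Real.norm_eq_abs, abs_le]
    exact ⟨by linarith [(hrange n ω).1], (hrange n ω).2⟩
  have hint : ∀ n, Integrable (X n) μ := fun n =>
    Integrable.mono' (integrable_const 1) (hXm n).aestronglyMeasurable
      (Eventually.of_forall (hXnorm n))
  -- independence of F_n and sigma(triple (n+1))
  set T : ℕ → Ω → ℝ × ℝ × ℝ := fun i ω =>
    (U i ω, (A i).indicator (1:Ω→ℝ) ω, (B i).indicator (1:Ω→ℝ) ω) with hT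
  set 𝓜 : ℕ → MeasurableSpace Ω := fun i =>
    if 1 ≤ i then MeasurableSpace.comap (T i) inferInstance else ⊥ with h𝓜
  have hTmeas : ∀ i, 1 ≤ i → Measurable (T i) := fun i hi =>
    (hU i hi).prodMk ((measurable_one.indicator (hA i hi)).prodMk
      (measurable_one.indicator (hB i hi)))
  have h𝓜le : ∀ i, 𝓜 i ≤ mΩ := by
    intro i
    by_cases hi : 1 ≤ i
    · simp only [h𝓜, if_pos hi]; exact (hTmeas i hi).comap_le
    · simp only [h𝓜, if_neg hi]; exact bot_le
  have hiid' : iIndep 𝓜 μ := by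
    refine bandit_iIndep_mono ((iIndepFun_iff_iIndep _ _ _).1 hiid) ?_
    intro i
    by_cases hi : 1 ≤ i
    · simp only [h𝓜, if_pos hi]; exact le_rfl
    · simp only [h𝓜, if_neg hi]; exact bot_le
  have hℱle𝓜 : ∀ n, (ℱ n : MeasurableSpace Ω) ≤ ⨆ i ∈ {k : ℕ | 1 ≤ k ∧ k ≤ n}, 𝓜 i := by
    intro n
    rw [hℱ n]
    refine iSup₂_le fun k hk => ?_
    rw [Finset.mem_Icc] at hk
    have hkm : k ∈ {k : ℕ | 1 ≤ k ∧ k ≤ n} := ⟨hk.1, hk.2⟩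
    refine le_trans ?_ (le_biSup _ hkm)
    have h𝓜k : 𝓜 k = MeasurableSpace.comap (T k) inferInstance := if_pos hk.1
    rw [h𝓜k]
    have hUeq : U k = (fun p : ℝ × ℝ × ℝ => p.1) ∘ T k := rfl
    have hAeq : (A k).indicator (1:Ω→ℝ) = (fun p : ℝ × ℝ × ℝ => p.2.1) ∘ T k := rfl
    have hBeq : (B k).indicator (1:Ω→ℝ) = (fun p : ℝ × ℝ × ℝ => p.2.2) ∘ T k := rfl
    refine sup_le (sup_le ?_ ?_) ?_
    · rw [hUeq, ← MeasurableSpace.comap_comp]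
      exact MeasurableSpace.comap_mono
        ((measurable_fst : Measurable fun p : ℝ × ℝ × ℝ => p.1).comap_le)
    · rw [hAeq, ← MeasurableSpace.comap_comp]
      exact MeasurableSpace.comap_mono
        ((measurable_fst.comp measurable_snd : Measurable fun p : ℝ × ℝ × ℝ => p.2.1).comap_le)
    · rw [hBeq, ← MeasurableSpace.comap_comp]
      exact MeasurableSpace.comap_mono
        ((measurable_snd.comp measurable_snd : Measurable fun p : ℝ × ℝ × ℝ => p.2.2).comap_le)
  have hindepF : ∀ n, Indep (MeasurableSpace.comap (T (n+1)) inferInstance) (ℱ n) μ := by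
    intro n
    have hdisj : Disjoint ({n+1} : Set ℕ) {k : ℕ | 1 ≤ k ∧ k ≤ n} := by
      rw [Set.disjoint_left]
      intro a ha hb
      rw [Set.mem_singleton_iff] at ha
      subst ha
      exact absurd hb.2 (by omega)
    have h := indep_iSup_of_disjoint h𝓜le hiid' hdisj
    refine indep_of_indep_of_le_right (indep_of_indep_of_le_left h ?_) (hℱle𝓜 n)
    refine le_trans ?_ (le_biSup _ (Set.mem_singleton (n+1)))
    rw [show 𝓜 (n+1) = MeasurableSpace.comap (T (n+1)) inferInstance from if_pos (by omega)]
    -- law of U and measure of joint events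
  have hμTA : ∀ n, ∀ c ∈ Set.Icc (0:ℝ) 1,
      μ ({ω' | U (n+1) ω' ≤ c} ∩ A (n+1)) = ENNReal.ofReal (c * pA) := by
    intro n c hc
    have hd1 : (1:ℕ) ≤ n+1 := by omega
    have hIF : IndepFun (U (n+1)) ((A (n+1)).indicator (1:Ω→ℝ)) μ :=
      hindep.comp (φ := fun f : ℕ → ℝ => f (n+1))
        (ψ := fun f : ℕ → ℝ × ℝ => (f (n+1)).1) (measurable_pi_apply _)
        (measurable_fst.comp (measurable_pi_apply _))
    have h := hIF.measure_inter_preimage_eq_mul (Set.Iic c) {1}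
      measurableSet_Iic (measurableSet_singleton 1)
    rw [bandit_ind_preimage_one] at h
    have hUc : μ (U (n+1) ⁻¹' Set.Iic c) = ENNReal.ofReal c := by
      rw [← Measure.map_apply (hU (n+1) hd1) measurableSet_Iic, hUlaw (n+1) hd1,
        Measure.restrict_apply measurableSet_Iic]
      have hic : Set.Iic c ∩ Set.Icc (0:ℝ) 1 = Set.Icc 0 c := by
        ext y
        simp only [Set.mem_inter_iff, Set.mem_Iic, Set.mem_Icc]
        constructor
        · rintro ⟨h1, h2, h3⟩; exact ⟨h2, h1⟩
        · rintro ⟨h1, h2⟩; exact ⟨h2, h1, h2.trans hc.2⟩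
      rw [hic, Real.volume_Icc, sub_zero]
    have hpre : U (n+1) ⁻¹' Set.Iic c = {ω' | U (n+1) ω' ≤ c} := rfl
    rw [hpre] at h hUc
    rw [h, hUc, hpA (n+1) hd1, ← ENNReal.ofReal_mul hc.1]
  have hμTB : ∀ n, ∀ c ∈ Set.Icc (0:ℝ) 1,
      μ ({ω' | c < U (n+1) ω'} ∩ B (n+1)) = ENNReal.ofReal ((1 - c) * pB) := by
    intro n c hc
    have hd1 : (1:ℕ) ≤ n+1 := by omega
    have hIF : IndepFun (U (n+1)) ((B (n+1)).indicator (1:Ω→ℝ)) μ :=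
      hindep.comp (φ := fun f : ℕ → ℝ => f (n+1))
        (ψ := fun f : ℕ → ℝ × ℝ => (f (n+1)).2) (measurable_pi_apply _)
        (measurable_snd.comp (measurable_pi_apply _))
    have h := hIF.measure_inter_preimage_eq_mul (Set.Ioi c) {1}
      measurableSet_Ioi (measurableSet_singleton 1)
    rw [bandit_ind_preimage_one] at h
    have hUc : μ (U (n+1) ⁻¹' Set.Ioi c) = ENNReal.ofReal (1 - c) := by
      rw [← Measure.map_apply (hU (n+1) hd1) measurableSet_Ioi, hUlaw (n+1) hd1,
        Measure.restrict_apply measurableSet_Ioi]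
      have hic : Set.Ioi c ∩ Set.Icc (0:ℝ) 1 = Set.Ioc c 1 := by
        ext y
        simp only [Set.mem_inter_iff, Set.mem_Ioi, Set.mem_Icc, Set.mem_Ioc]
        constructor
        · rintro ⟨h1, h2, h3⟩; exact ⟨h1, h3⟩
        · rintro ⟨h1, h2⟩; exact ⟨h1, (hc.1.trans h1.le), h2⟩
      rw [hic, Real.volume_Ioc]
    have hpre : U (n+1) ⁻¹' Set.Ioi c = {ω' | c < U (n+1) ω'} := rfl
    rw [hpre] at h hUc
    rw [h, hUc, hpB (n+1) hd1, ← ENNReal.ofReal_mul (by linarith [hc.2])]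
  -- the conditional expectation identity
  have hcond : ∀ n, μ[X (n+1) | ℱ n]
      =ᵐ[μ] fun ω => X n ω + γ (n+1) * (π * (X n ω * (1 - X n ω))) := by
    intro n
    obtain ⟨s, hs01, hscov⟩ := hfin n
    have hd1 : (1:ℕ) ≤ n+1 := by omega
    set SA := {ω' | U (n + 1) ω' ≤ X n ω'} ∩ A (n + 1) with hSAdef
    set SB := {ω' | X n ω' < U (n + 1) ω'} ∩ B (n + 1) with hSBdef
    set YA : Ω → ℝ := fun ω => (1 - X n ω) * SA.indicator (1:Ω→ℝ) ω with hYAdef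
    set YB : Ω → ℝ := fun ω => X n ω * SB.indicator (1:Ω→ℝ) ω with hYBdef
    have hSAm : MeasurableSet SA :=
      (measurableSet_le (hU (n+1) hd1) (hXm n)).inter (hA (n+1) hd1)
    have hSBm : MeasurableSet SB :=
      (measurableSet_lt (hXm n) (hU (n+1) hd1)).inter (hB (n+1) hd1)
    have hYAme : Measurable YA := (measurable_const.sub (hXm n)).mul
      (measurable_const.indicator hSAm)
    have hYBme : Measurable YB := (hXm n).mul (measurable_const.indicator hSBm)
    have hYAb : ∀ ω, ‖YA ω‖ ≤ 1 := by
      intro ω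
      have h1 := hrange n ω
      have h2 := bandit_ind_mem SA ω
      rw [Real.norm_eq_abs, hYAdef]
      rw [abs_mul, abs_of_nonneg (by linarith [h1.2] : (0:ℝ) ≤ 1 - X n ω),
        abs_of_nonneg h2.1]
      nlinarith [h1.1, h1.2, h2.1, h2.2]
    have hYBb : ∀ ω, ‖YB ω‖ ≤ 1 := by
      intro ω
      have h1 := hrange n ω
      have h2 := bandit_ind_mem SB ω
      rw [Real.norm_eq_abs, hYBdef]
      rw [abs_mul, abs_of_nonneg h1.1, abs_of_nonneg h2.1]
      nlinarith [h1.1, h1.2, h2.1, h2.2]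
    have hYAint : Integrable YA μ := Integrable.mono' (integrable_const 1)
      hYAme.aestronglyMeasurable (Eventually.of_forall hYAb)
    have hYBint : Integrable YB μ := Integrable.mono' (integrable_const 1)
      hYBme.aestronglyMeasurable (Eventually.of_forall hYBb)
    -- per-value conditional expectations
    have hEm : ∀ c : ℝ, MeasurableSet[ℱ n] {ω' | X n ω' = c} := by
      intro c
      have : {ω' | X n ω' = c} = X n ⁻¹' {c} := by ext ω'; simp
      rw [this]
      exact (hadp n).measurable (measurableSet_singleton c)
    have hEmΩ : ∀ c : ℝ, MeasurableSet {ω' | X n ω' = c} :=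
      fun c => ℱ.le n _ (hEm c)
    have htermA : ∀ c ∈ s, μ[fun ω => ({ω' | X n ω' = c}).indicator (1:Ω→ℝ) ω *
        ((1 - c) * ({ω' | U (n+1) ω' ≤ c} ∩ A (n+1)).indicator (1:Ω→ℝ) ω) | ℱ n]
        =ᵐ[μ] fun ω => ({ω' | X n ω' = c}).indicator (1:Ω→ℝ) ω * ((1 - c) * (c * pA)) := by
      intro c hc
      obtain ⟨hc0, hc1⟩ := hs01 c hc
      have hTAm₁ : MeasurableSet[MeasurableSpace.comap (T (n+1)) inferInstance]
          ({ω' | U (n+1) ω' ≤ c} ∩ A (n+1)) := by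
        refine ⟨(Set.Iic c) ×ˢ (({1} : Set ℝ) ×ˢ (Set.univ : Set ℝ)), ?_, ?_⟩
        · exact measurableSet_Iic.prod ((measurableSet_singleton 1).prod MeasurableSet.univ)
        · ext ω
          simp only [Set.mem_preimage, Set.mem_prod, Set.mem_Iic, Set.mem_singleton_iff,
            Set.mem_univ, and_true, Set.mem_inter_iff, Set.mem_setOf_eq, hT]
          exact and_congr Iff.rfl (bandit_ind_one_iff _ ω)
      have hg : StronglyMeasurable[MeasurableSpace.comap (T (n+1)) inferInstance]
          (fun ω => (1 - c) * ({ω' | U (n+1) ω' ≤ c} ∩ A (n+1)).indicator (1:Ω→ℝ) ω) :=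
        stronglyMeasurable_const.mul (stronglyMeasurable_const.indicator hTAm₁)
      have hgb : ∀ ω, |(1 - c) * ({ω' | U (n+1) ω' ≤ c} ∩ A (n+1)).indicator (1:Ω→ℝ) ω| ≤ 1 := by
        intro ω
        have h2 := bandit_ind_mem ({ω' | U (n+1) ω' ≤ c} ∩ A (n+1)) ω
        rw [abs_mul, abs_of_nonneg (by linarith : (0:ℝ) ≤ 1 - c), abs_of_nonneg h2.1]
        nlinarith [h2.1, h2.2]
      have hpull := bandit_pullout (ℱ.le n) ((hTmeas (n+1) hd1).comap_le)
        (hindepF n) (hEm c) hg hgb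
      refine hpull.trans (Eventually.of_forall fun ω => ?_)
      have hTAmΩ : MeasurableSet ({ω' | U (n+1) ω' ≤ c} ∩ A (n+1)) :=
        (measurableSet_le (hU (n+1) hd1) measurable_const).inter (hA (n+1) hd1)
      have : ∫ y, (1 - c) * ({ω' | U (n+1) ω' ≤ c} ∩ A (n+1)).indicator (1:Ω→ℝ) y ∂μ
          = (1 - c) * (c * pA) := by
        rw [integral_const_mul, integral_indicator_one hTAmΩ, measureReal_def, hμTA n c ⟨hc0, hc1⟩,
          ENNReal.toReal_ofReal (mul_nonneg hc0 hpApos.le)]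
      rw [this]
    have htermB : ∀ c ∈ s, μ[fun ω => ({ω' | X n ω' = c}).indicator (1:Ω→ℝ) ω *
        (c * ({ω' | c < U (n+1) ω'} ∩ B (n+1)).indicator (1:Ω→ℝ) ω) | ℱ n]
        =ᵐ[μ] fun ω => ({ω' | X n ω' = c}).indicator (1:Ω→ℝ) ω * (c * ((1 - c) * pB)) := by
      intro c hc
      obtain ⟨hc0, hc1⟩ := hs01 c hc
      have hTBm₁ : MeasurableSet[MeasurableSpace.comap (T (n+1)) inferInstance]
          ({ω' | c < U (n+1) ω'} ∩ B (n+1)) := by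
        refine ⟨(Set.Ioi c) ×ˢ ((Set.univ : Set ℝ) ×ˢ ({1} : Set ℝ)), ?_, ?_⟩
        · exact measurableSet_Ioi.prod (MeasurableSet.univ.prod (measurableSet_singleton 1))
        · ext ω
          simp only [Set.mem_preimage, Set.mem_prod, Set.mem_Ioi, Set.mem_singleton_iff,
            Set.mem_univ, true_and, Set.mem_inter_iff, Set.mem_setOf_eq, hT]
          exact and_congr Iff.rfl (bandit_ind_one_iff _ ω)
      have hg : StronglyMeasurable[MeasurableSpace.comap (T (n+1)) inferInstance]
          (fun ω => c * ({ω' | c < U (n+1) ω'} ∩ B (n+1)).indicator (1:Ω→ℝ) ω) :=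
        stronglyMeasurable_const.mul (stronglyMeasurable_const.indicator hTBm₁)
      have hgb : ∀ ω, |c * ({ω' | c < U (n+1) ω'} ∩ B (n+1)).indicator (1:Ω→ℝ) ω| ≤ 1 := by
        intro ω
        have h2 := bandit_ind_mem ({ω' | c < U (n+1) ω'} ∩ B (n+1)) ω
        rw [abs_mul, abs_of_nonneg hc0, abs_of_nonneg h2.1]
        nlinarith [h2.1, h2.2]
      have hpull := bandit_pullout (ℱ.le n) ((hTmeas (n+1) hd1).comap_le)
        (hindepF n) (hEm c) hg hgb
      refine hpull.trans (Eventually.of_forall fun ω => ?_)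
      have hTBmΩ : MeasurableSet ({ω' | c < U (n+1) ω'} ∩ B (n+1)) :=
        (measurableSet_lt measurable_const (hU (n+1) hd1)).inter (hB (n+1) hd1)
      have : ∫ y, c * ({ω' | c < U (n+1) ω'} ∩ B (n+1)).indicator (1:Ω→ℝ) y ∂μ
          = c * ((1 - c) * pB) := by
        rw [integral_const_mul, integral_indicator_one hTBmΩ, measureReal_def, hμTB n c ⟨hc0, hc1⟩,
          ENNReal.toReal_ofReal (mul_nonneg (by linarith) hpB0.le)]
      rw [this]
    -- decomposition of YA, YB as finite sums over the values of X n
    have hYA_eq : YA = ∑ c ∈ s, (fun ω => ({ω' | X n ω' = c}).indicator (1:Ω→ℝ) ω *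
        ((1 - c) * ({ω' | U (n+1) ω' ≤ c} ∩ A (n+1)).indicator (1:Ω→ℝ) ω)) := by
      funext ω
      simp only [Finset.sum_apply]
      have hcoll : ∑ c ∈ s, ({ω' | X n ω' = c}).indicator (1:Ω→ℝ) ω *
          ((1 - c) * ({ω' | U (n+1) ω' ≤ c} ∩ A (n+1)).indicator (1:Ω→ℝ) ω)
          = (1 - X n ω) * ({ω' | U (n+1) ω' ≤ X n ω} ∩ A (n+1)).indicator (1:Ω→ℝ) ω :=
        bandit_collapse s ω (hscov ω) _
      rw [hcoll]
      show (1 - X n ω) * SA.indicator (1:Ω→ℝ) ω = _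
      have : SA.indicator (1:Ω→ℝ) ω
          = ({ω' | U (n+1) ω' ≤ X n ω} ∩ A (n+1)).indicator (1:Ω→ℝ) ω := by
        refine bandit_ind_congr ?_
        rw [hSAdef]
        simp only [Set.mem_inter_iff, Set.mem_setOf_eq]
      rw [this]
    have hYB_eq : YB = ∑ c ∈ s, (fun ω => ({ω' | X n ω' = c}).indicator (1:Ω→ℝ) ω *
        (c * ({ω' | c < U (n+1) ω'} ∩ B (n+1)).indicator (1:Ω→ℝ) ω)) := by
      funext ω
      simp only [Finset.sum_apply]
      have hcoll : ∑ c ∈ s, ({ω' | X n ω' = c}).indicator (1:Ω→ℝ) ω *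
          (c * ({ω' | c < U (n+1) ω'} ∩ B (n+1)).indicator (1:Ω→ℝ) ω)
          = X n ω * ({ω' | X n ω < U (n+1) ω'} ∩ B (n+1)).indicator (1:Ω→ℝ) ω :=
        bandit_collapse s ω (hscov ω) _
      rw [hcoll]
      show X n ω * SB.indicator (1:Ω→ℝ) ω = _
      have : SB.indicator (1:Ω→ℝ) ω
          = ({ω' | X n ω < U (n+1) ω'} ∩ B (n+1)).indicator (1:Ω→ℝ) ω := by
        refine bandit_ind_congr ?_
        rw [hSBdef]
        simp only [Set.mem_inter_iff, Set.mem_setOf_eq]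
      rw [this]
    -- integrability of the summands
    have hFAint : ∀ c ∈ s, Integrable (fun ω => ({ω' | X n ω' = c}).indicator (1:Ω→ℝ) ω *
        ((1 - c) * ({ω' | U (n+1) ω' ≤ c} ∩ A (n+1)).indicator (1:Ω→ℝ) ω)) μ := by
      intro c hc
      obtain ⟨hc0, hc1⟩ := hs01 c hc
      have hTAmΩ : MeasurableSet ({ω' | U (n+1) ω' ≤ c} ∩ A (n+1)) :=
        (measurableSet_le (hU (n+1) hd1) measurable_const).inter (hA (n+1) hd1)
      refine Integrable.mono' (integrable_const 1)
        ((measurable_const.indicator (hEmΩ c)).mul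
          (measurable_const.mul (measurable_const.indicator hTAmΩ))).aestronglyMeasurable
        (Eventually.of_forall fun ω => ?_)
      have h1 := bandit_ind_mem {ω' | X n ω' = c} ω
      have h2 := bandit_ind_mem ({ω' | U (n+1) ω' ≤ c} ∩ A (n+1)) ω
      rw [Real.norm_eq_abs, abs_mul, abs_of_nonneg h1.1, abs_mul,
        abs_of_nonneg (by linarith : (0:ℝ) ≤ 1 - c), abs_of_nonneg h2.1]
      have hq0 : (0:ℝ) ≤ (1 - c) * ({ω' | U (n+1) ω' ≤ c} ∩ A (n+1)).indicator (1:Ω→ℝ) ω :=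
        mul_nonneg (by linarith) h2.1
      have hq1 : (1 - c) * ({ω' | U (n+1) ω' ≤ c} ∩ A (n+1)).indicator (1:Ω→ℝ) ω ≤ 1 := by
        nlinarith [h2.1, h2.2]
      exact mul_le_one₀ h1.2 hq0 hq1
    have hFBint : ∀ c ∈ s, Integrable (fun ω => ({ω' | X n ω' = c}).indicator (1:Ω→ℝ) ω *
        (c * ({ω' | c < U (n+1) ω'} ∩ B (n+1)).indicator (1:Ω→ℝ) ω)) μ := by
      intro c hc
      obtain ⟨hc0, hc1⟩ := hs01 c hc
      have hTBmΩ : MeasurableSet ({ω' | c < U (n+1) ω'} ∩ B (n+1)) :=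
        (measurableSet_lt measurable_const (hU (n+1) hd1)).inter (hB (n+1) hd1)
      refine Integrable.mono' (integrable_const 1)
        ((measurable_const.indicator (hEmΩ c)).mul
          (measurable_const.mul (measurable_const.indicator hTBmΩ))).aestronglyMeasurable
        (Eventually.of_forall fun ω => ?_)
      have h1 := bandit_ind_mem {ω' | X n ω' = c} ω
      have h2 := bandit_ind_mem ({ω' | c < U (n+1) ω'} ∩ B (n+1)) ω
      rw [Real.norm_eq_abs, abs_mul, abs_of_nonneg h1.1, abs_mul,
        abs_of_nonneg hc0, abs_of_nonneg h2.1]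
      have hq0 : (0:ℝ) ≤ c * ({ω' | c < U (n+1) ω'} ∩ B (n+1)).indicator (1:Ω→ℝ) ω :=
        mul_nonneg hc0 h2.1
      have hq1 : c * ({ω' | c < U (n+1) ω'} ∩ B (n+1)).indicator (1:Ω→ℝ) ω ≤ 1 := by
        nlinarith [h2.1, h2.2]
      exact mul_le_one₀ h1.2 hq0 hq1
    -- conditional expectations of YA, YB
    have hcondYA : μ[YA | ℱ n] =ᵐ[μ] fun ω => pA * (X n ω * (1 - X n ω)) := by
      rw [hYA_eq]
      refine (condExp_finset_sum hFAint (ℱ n)).trans ?_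
      have hae : ∀ᵐ ω ∂μ, ∀ c ∈ (s : Set ℝ),
          (μ[fun ω => ({ω' | X n ω' = c}).indicator (1:Ω→ℝ) ω *
            ((1 - c) * ({ω' | U (n+1) ω' ≤ c} ∩ A (n+1)).indicator (1:Ω→ℝ) ω) | ℱ n]) ω
          = ({ω' | X n ω' = c}).indicator (1:Ω→ℝ) ω * ((1 - c) * (c * pA)) :=
        (ae_ball_iff s.countable_toSet).2 fun c hc => htermA c hc
      filter_upwards [hae] with ω hω
      rw [Finset.sum_apply, Finset.sum_congr rfl fun c hc => hω c hc]
      have hcoll : ∑ c ∈ s, ({ω' | X n ω' = c}).indicator (1:Ω→ℝ) ω * ((1 - c) * (c * pA))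
          = (1 - X n ω) * (X n ω * pA) := bandit_collapse s ω (hscov ω) _
      rw [hcoll]; ring
    have hcondYB : μ[YB | ℱ n] =ᵐ[μ] fun ω => pB * (X n ω * (1 - X n ω)) := by
      rw [hYB_eq]
      refine (condExp_finset_sum hFBint (ℱ n)).trans ?_
      have hae : ∀ᵐ ω ∂μ, ∀ c ∈ (s : Set ℝ),
          (μ[fun ω => ({ω' | X n ω' = c}).indicator (1:Ω→ℝ) ω *
            (c * ({ω' | c < U (n+1) ω'} ∩ B (n+1)).indicator (1:Ω→ℝ) ω) | ℱ n]) ω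
          = ({ω' | X n ω' = c}).indicator (1:Ω→ℝ) ω * (c * ((1 - c) * pB)) :=
        (ae_ball_iff s.countable_toSet).2 fun c hc => htermB c hc
      filter_upwards [hae] with ω hω
      rw [Finset.sum_apply, Finset.sum_congr rfl fun c hc => hω c hc]
      have hcoll : ∑ c ∈ s, ({ω' | X n ω' = c}).indicator (1:Ω→ℝ) ω * (c * ((1 - c) * pB))
          = X n ω * ((1 - X n ω) * pB) := bandit_collapse s ω (hscov ω) _
      rw [hcoll]; ring
    -- combine
    have hXr : X (n+1) = X n + γ (n+1) • (YA - YB) := by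
      funext ω
      simp only [Pi.add_apply, Pi.smul_apply, Pi.sub_apply, smul_eq_mul, hYAdef, hYBdef]
      exact hrec n ω
    have hYdiffint : Integrable (γ (n+1) • (YA - YB)) μ := (hYAint.sub hYBint).smul _
    have e1 : μ[X (n+1)|ℱ n] =ᵐ[μ] μ[X n|ℱ n] + μ[γ (n+1) • (YA - YB)|ℱ n] := by
      rw [hXr]; exact condExp_add (hint n) hYdiffint (ℱ n)
    have e2 : μ[γ (n+1) • (YA - YB)|ℱ n] =ᵐ[μ] γ (n+1) • μ[YA - YB|ℱ n] :=
      condExp_smul (γ (n+1)) (YA - YB) (ℱ n)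
    have e3 : μ[YA - YB|ℱ n] =ᵐ[μ] μ[YA|ℱ n] - μ[YB|ℱ n] := condExp_sub hYAint hYBint (ℱ n)
    have e0 : μ[X n|ℱ n] = X n := condExp_of_stronglyMeasurable (ℱ.le n) (hadp n) (hint n)
    filter_upwards [e1, e2, e3, hcondYA, hcondYB] with ω h1 h2 h3 h4 h5
    rw [h1, Pi.add_apply, e0, h2, Pi.smul_apply, h3, Pi.sub_apply, h4, h5, smul_eq_mul, hπ]
    ring
    -- integrability of X n (1 - X n)
  have hq : ∀ n, Integrable (fun ω => X n ω * (1 - X n ω)) μ := by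
    intro n
    refine Integrable.mono' (integrable_const 1)
      ((hXm n).mul (measurable_const.sub (hXm n))).aestronglyMeasurable
      (Eventually.of_forall fun ω => ?_)
    have h := hrange n ω
    rw [Real.norm_eq_abs, abs_mul, abs_of_nonneg h.1, abs_of_nonneg (by linarith [h.2])]
    nlinarith [h.1, h.2]
  have hqnn : ∀ n, 0 ≤ ∫ ω, X n ω * (1 - X n ω) ∂μ := fun n =>
    integral_nonneg fun ω => mul_nonneg (hrange n ω).1 (by linarith [(hrange n ω).2])
  -- submartingale
  have hsub : Submartingale X ℱ μ := by
    refine submartingale_nat (fun n => hadp n) hint fun i => ?_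
    filter_upwards [hcond i] with ω hω
    rw [hω]
    have h := hrange i ω
    have hγi := hγ (i+1) (by omega)
    have hpos : 0 ≤ γ (i+1) * (π * (X i ω * (1 - X i ω))) :=
      mul_nonneg hγi.1.le (mul_nonneg hπpos.le (mul_nonneg h.1 (by linarith [h.2])))
    linarith
  -- expectation recursion
  have hIX : ∀ n, ∫ ω, X (n+1) ω ∂μ
      = ∫ ω, X n ω ∂μ + γ (n+1) * (π * ∫ ω, X n ω * (1 - X n ω) ∂μ) := by
    intro n
    haveI : SigmaFinite (μ.trim (ℱ.le n)) := sigmaFiniteTrim_mono _ le_rfl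
    have h1 : ∫ ω, X (n+1) ω ∂μ = ∫ ω, (μ[X (n+1)|ℱ n]) ω ∂μ :=
      (integral_condExp (ℱ.le n)).symm
    rw [h1, integral_congr_ae (hcond n)]
    have h2 : Integrable (fun ω => γ (n+1) * (π * (X n ω * (1 - X n ω)))) μ :=
      ((hq n).const_mul π).const_mul (γ (n+1))
    rw [integral_add (hint n) h2, integral_const_mul, integral_const_mul]
  -- partial sums of expectations
  have hps : ∀ N, ∫ ω, X N ω ∂μ
      = x + π * ∑ k ∈ Finset.range N, γ (k+1) * ∫ ω, X k ω * (1 - X k ω) ∂μ := by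
    intro N
    induction N with
    | zero => simp [hX0, integral_const]
    | succ N ih => rw [hIX N, ih, Finset.sum_range_succ]; ring
  set a : ℕ → ℝ := fun k => γ (k+1) * ∫ ω, X k ω * (1 - X k ω) ∂μ with ha
  have hann : ∀ k, 0 ≤ a k := fun k => mul_nonneg (hγ (k+1) (by omega)).1.le (hqnn k)
  have hXNle : ∀ N, ∫ ω, X N ω ∂μ ≤ 1 := by
    intro N
    calc ∫ ω, X N ω ∂μ ≤ ∫ _, (1:ℝ) ∂μ :=
          integral_mono (hint N) (integrable_const 1) fun ω => (hrange N ω).2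
      _ = 1 := by simp
  have hasum : Summable a := by
    refine summable_of_sum_range_le (c := (1 - x)/π) hann fun N => ?_
    have h := hps N
    have h2 := hXNle N
    rw [le_div_iff₀ hπpos, mul_comm]
    linarith
  -- limit process
  have hbdd : ∀ n, eLpNorm (X n) 1 μ ≤ ((1:NNReal) : ENNReal) := by
    intro n
    have := eLpNorm_le_of_ae_bound (f := X n) (p := 1) (μ := μ) (C := 1)
      (Eventually.of_forall (hXnorm n))
    simpa using this
  set Xinf := ℱ.limitProcess X μ with hXinfdef
  have htend : ∀ᵐ ω ∂μ, Tendsto (fun n => X n ω) atTop (nhds (Xinf ω)) :=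
    hsub.ae_tendsto_limitProcess hbdd
  have hXinfm : StronglyMeasurable Xinf :=
    Filtration.stronglyMeasurable_limitProcess.mono (sSup_le fun _ ⟨_, hn⟩ => hn ▸ ℱ.le _)
  have hXinfrange : ∀ᵐ ω ∂μ, Xinf ω ∈ Set.Icc (0:ℝ) 1 := by
    filter_upwards [htend] with ω hω
    exact isClosed_Icc.mem_of_tendsto hω (Eventually.of_forall fun n => hrange n ω)
  -- convergence of integrals
  have hItend : Tendsto (fun N => ∫ ω, X N ω ∂μ) atTop (nhds (∫ ω, Xinf ω ∂μ)) :=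
    tendsto_integral_of_dominated_convergence (fun _ => (1:ℝ))
      (fun n => (hXm n).aestronglyMeasurable) (integrable_const 1)
      (fun n => Eventually.of_forall (hXnorm n)) htend
  have hqb : ∀ n ω, ‖X n ω * (1 - X n ω)‖ ≤ 1 := by
    intro n ω
    have h := hrange n ω
    rw [Real.norm_eq_abs, abs_mul, abs_of_nonneg h.1, abs_of_nonneg (by linarith [h.2])]
    nlinarith [h.1, h.2]
  have hqtend : Tendsto (fun N => ∫ ω, X N ω * (1 - X N ω) ∂μ) atTop
      (nhds (∫ ω, Xinf ω * (1 - Xinf ω) ∂μ)) := by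
    refine tendsto_integral_of_dominated_convergence (fun _ => (1:ℝ))
      (fun n => ((hXm n).mul (measurable_const.sub (hXm n))).aestronglyMeasurable)
      (integrable_const 1) (fun n => Eventually.of_forall (hqb n)) ?_
    filter_upwards [htend] with ω hω
    exact hω.mul (tendsto_const_nhds.sub hω)
  -- the tsum identity
  have hpartial : Tendsto (fun N => ∑ k ∈ Finset.range N, a k) atTop
      (nhds ((∫ ω, Xinf ω ∂μ - x)/π)) := by
    have heq : (fun N => ∑ k ∈ Finset.range N, a k)
        = fun N => (∫ ω, X N ω ∂μ - x)/π := by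
      funext N
      rw [hps N]
      field_simp
      ring
    rw [heq]
    exact (hItend.sub tendsto_const_nhds).div_const π
  have htsum : ∑' k, a k = (∫ ω, Xinf ω ∂μ - x)/π :=
    tendsto_nhds_unique hasum.hasSum.tendsto_sum_nat hpartial
  have hIXinf : ∫ ω, Xinf ω ∂μ = x + π * ∑' k, a k := by
    rw [htsum, mul_div_cancel₀ _ hπpos.ne']
    ring
  -- the limit concentrates on {0, 1}
  have hqinn : 0 ≤ᵐ[μ] fun ω => Xinf ω * (1 - Xinf ω) := by
    filter_upwards [hXinfrange] with ω hω
    exact mul_nonneg hω.1 (by linarith [hω.2])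
  have hqiint : Integrable (fun ω => Xinf ω * (1 - Xinf ω)) μ := by
    refine Integrable.mono' (integrable_const 1)
      (hXinfm.measurable.mul (measurable_const.sub hXinfm.measurable)).aestronglyMeasurable ?_
    filter_upwards [hXinfrange] with ω hω
    rw [Real.norm_eq_abs, abs_mul, abs_of_nonneg hω.1, abs_of_nonneg (by linarith [hω.2])]
    nlinarith [hω.1, hω.2]
  have hb0 : ∫ ω, Xinf ω * (1 - Xinf ω) ∂μ = 0 := by
    by_contra hne
    have hbnn : 0 ≤ ∫ ω, Xinf ω * (1 - Xinf ω) ∂μ := integral_nonneg_of_ae hqinn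
    have hbpos : 0 < ∫ ω, Xinf ω * (1 - Xinf ω) ∂μ := lt_of_le_of_ne hbnn (Ne.symm hne)
    set b := ∫ ω, Xinf ω * (1 - Xinf ω) ∂μ with hbdef
    obtain ⟨N₀, hN₀⟩ := eventually_atTop.1
      (hqtend.eventually (eventually_ge_nhds (by linarith : b/2 < b)))
    have hsum2 : Summable (fun k => a (k + N₀)) := (summable_nat_add_iff N₀).2 hasum
    have hcomp : Summable (fun k => (b/2) * γ (k + N₀ + 1)) := by
      refine Summable.of_nonneg_of_le (fun k => ?_) (fun k => ?_) hsum2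
      · exact mul_nonneg (by linarith) (hγ (k + N₀ + 1) (by omega)).1.le
      · have h1 := hN₀ (k + N₀) (by omega)
        have hγk := hγ (k + N₀ + 1) (by omega)
        calc b/2 * γ (k + N₀ + 1) = γ (k + N₀ + 1) * (b/2) := mul_comm _ _
          _ ≤ γ (k + N₀ + 1) * ∫ ω, X (k + N₀) ω * (1 - X (k + N₀) ω) ∂μ :=
            mul_le_mul_of_nonneg_left h1 hγk.1.le
          _ = a (k + N₀) := rfl
    have hsumγ' : Summable (fun k => γ (k + N₀ + 1)) :=
      (summable_mul_left_iff (by positivity : b/2 ≠ 0)).1 hcomp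
    have hsumγ : Summable (fun k => γ (k + 1)) := by
      refine (summable_nat_add_iff N₀).1 ?_
      exact hsumγ'
    have hdiv : Tendsto (fun N => ∑ k ∈ Finset.range N, γ (k+1)) atTop atTop := by
      have heq : ∀ N, ∑ k ∈ Finset.range N, γ (k+1) = ∑ k ∈ Finset.Icc 1 N, γ k := by
        intro N
        rw [← Finset.Ico_add_one_right_eq_Icc, Finset.sum_Ico_eq_sum_range]
        simp [Nat.add_comm]
      have : (fun N => ∑ k ∈ Finset.range N, γ (k+1))
          = fun N => ∑ k ∈ Finset.Icc 1 N, γ k := funext heq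
      rw [this]
      exact hΓdiv
    exact not_tendsto_atTop_of_tendsto_nhds hsumγ.hasSum.tendsto_sum_nat hdiv
  have hXinf01 : ∀ᵐ ω ∂μ, Xinf ω = 0 ∨ Xinf ω = 1 := by
    have h := (integral_eq_zero_iff_of_nonneg_ae hqinn hqiint).1 hb0
    filter_upwards [h] with ω hω
    have hω' : Xinf ω * (1 - Xinf ω) = 0 := hω
    rcases mul_eq_zero.1 hω' with h' | h'
    · exact Or.inl h'
    · exact Or.inr (by linarith)
  -- the probability of reaching 1
  have hSmeas : MeasurableSet {ω | Xinf ω = 1} := by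
    have : {ω | Xinf ω = 1} = Xinf ⁻¹' {1} := rfl
    rw [this]
    exact hXinfm.measurable (measurableSet_singleton 1)
  have hind_eq : ∫ ω, Xinf ω ∂μ = (μ {ω | Xinf ω = 1}).toReal := by
    rw [← measureReal_def, ← integral_indicator_one hSmeas]
    refine integral_congr_ae ?_
    filter_upwards [hXinf01] with ω hω
    rcases hω with h | h
    · rw [h, Set.indicator_of_notMem (by simp [h] : ω ∉ {ω | Xinf ω = 1})]
    · rw [h, Set.indicator_of_mem (by simp [h] : ω ∈ {ω | Xinf ω = 1})]
      rfl
  have hμS : μ {ω | Xinf ω = 1} = ENNReal.ofReal (x + π * ∑' k, a k) := by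
    calc μ {ω | Xinf ω = 1} = ENNReal.ofReal ((μ {ω | Xinf ω = 1}).toReal) :=
          (ENNReal.ofReal_toReal (measure_ne_top μ _)).symm
      _ = ENNReal.ofReal (x + π * ∑' k, a k) := by rw [← hind_eq, hIXinf]
  have htpos : 0 < π * ∑' k, a k := by
    refine mul_pos hπpos ?_
    have h0 : 0 < a 0 := by
      have hγ1 := hγ 1 (le_refl 1)
      have hI0 : ∫ ω, X 0 ω * (1 - X 0 ω) ∂μ = x * (1 - x) := by
        simp [hX0, integral_const]
      show 0 < γ (0+1) * ∫ ω, X 0 ω * (1 - X 0 ω) ∂μ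
      rw [hI0]
      exact mul_pos hγ1.1 (mul_pos hx.1 (by linarith [hx.2]))
    exact lt_of_lt_of_le h0 (hasum.le_tsum 0 fun k _ => hann k)
  have hstrict : ENNReal.ofReal x < μ {ω | Xinf ω = 1} := by
    rw [hμS]
    exact (ENNReal.ofReal_lt_ofReal_iff_of_nonneg hx.1.le).2 (by linarith)
  exact ⟨hsub, hrange, Xinf, htend, hXinf01, hμS, hstrict⟩
end

section
/- If $\sum_{n\ge0}\prod_{k=1}^n(1-p_B\gamma_k)<+\infty$ and $p_B>0$, then for every $x\in[0,1)$, $\mathbb{P}_x(X_n\to0)>0$. More precisely, $\mathbb{P}_x(X_\infty=0) \ge \mathbb{E}_x\big[\prod_{n\ge1}\big(1 - x\prod_{k=1}^{n-1}(1-\mathbf{1}_{B_k}\gamma_k)\big)\big] > 0$. -/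
open MeasureTheory ProbabilityTheory Filter Set Topology

lemma aux_weier {δ : ℕ → ℝ} : ∀ {s : Finset ℕ}, (∀ i ∈ s, 0 ≤ δ i) → (∀ i ∈ s, δ i ≤ 1) →
    1 - ∑ i ∈ s, δ i ≤ ∏ i ∈ s, (1 - δ i) := by
  intro s
  induction s using Finset.cons_induction with
  | empty => simp
  | cons a s ha ih =>
    intro h0 h1
    rw [Finset.prod_cons, Finset.sum_cons]
    have h0a := h0 a (by simp)
    have h1a := h1 a (by simp)
    have ih' := ih (fun i hi => h0 i (by simp [hi])) (fun i hi => h1 i (by simp [hi]))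
    have hs0 : 0 ≤ ∑ i ∈ s, δ i := Finset.sum_nonneg fun i hi => h0 i (by simp [hi])
    nlinarith [mul_le_mul_of_nonneg_left ih' (by linarith : (0:ℝ) ≤ 1 - δ a)]

lemma aux_prod_subset {h : ℕ → ℝ} (h0 : ∀ n, 0 ≤ h n) (h1 : ∀ n, h n ≤ 1)
    {s t : Finset ℕ} (hst : s ⊆ t) : ∏ i ∈ t, h i ≤ ∏ i ∈ s, h i := by
  rw [← Finset.prod_sdiff hst]
  exact mul_le_of_le_one_left (Finset.prod_nonneg fun i _ => h0 i)
    (Finset.prod_le_one (fun i _ => h0 i) (fun i _ => h1 i))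

lemma aux_hasProd {h : ℕ → ℝ} (h0 : ∀ n, 0 ≤ h n) (h1 : ∀ n, h n ≤ 1) :
    HasProd h (⨅ N, ∏ i ∈ Finset.range N, h i) := by
  set Q : ℕ → ℝ := fun N => ∏ i ∈ Finset.range N, h i with hQ
  have hQ0 : ∀ N, 0 ≤ Q N := fun N => Finset.prod_nonneg fun i _ => h0 i
  have hbdd : BddBelow (Set.range Q) := ⟨0, by rintro y ⟨N, rfl⟩; exact hQ0 N⟩
  have hanti : Antitone Q := antitone_nat_of_succ_le fun N => by
    rw [hQ]; simp only [Finset.prod_range_succ]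
    exact mul_le_of_le_one_right (hQ0 N) (h1 N)
  have hlim : Tendsto Q atTop (𝓝 (⨅ N, Q N)) := tendsto_atTop_ciInf hanti hbdd
  set L : ℝ := ⨅ N, Q N
  have hL_le : ∀ s : Finset ℕ, L ≤ ∏ i ∈ s, h i := by
    intro s
    obtain ⟨M, hM⟩ := s.exists_nat_subset_range
    exact le_trans (ciInf_le hbdd M) (aux_prod_subset h0 h1 hM)
  rw [HasProd, Metric.tendsto_nhds]
  intro ε hε
  obtain ⟨N, hN⟩ := (hlim.eventually (gt_mem_nhds (lt_add_of_pos_right L hε))).exists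
  rw [SummationFilter.unconditional_filter, eventually_atTop]
  refine ⟨Finset.range N, fun s hs => ?_⟩
  have h2 : ∏ i ∈ s, h i ≤ Q N := aux_prod_subset h0 h1 hs
  rw [Real.dist_eq, abs_of_nonneg (by linarith [hL_le s])]
  linarith [hL_le s]

lemma aux_Icc_range {M : Type*} [CommMonoid M] (f : ℕ → M) (N : ℕ) :
    ∏ n ∈ Finset.Icc 1 N, f n = ∏ m ∈ Finset.range N, f (m + 1) := by
  induction N with
  | zero => simp
  | succ N ih =>
    rw [Finset.prod_Icc_succ_top (by omega), ih, Finset.prod_range_succ]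

theorem stmt13 (Ω : Type*) [mΩ : MeasurableSpace Ω] (μ : Measure Ω) [IsProbabilityMeasure μ]
    (U : ℕ → Ω → ℝ) (A B : ℕ → Set Ω) (γ : ℕ → ℝ) (x : ℝ)
    (hx : x ∈ Set.Ico (0:ℝ) 1)
    (pA pB : ℝ) (hpBpos : 0 < pB)
    (hpA : ∀ n ≥ 1, μ (A n) = ENNReal.ofReal pA)
    (hpB : ∀ n ≥ 1, μ (B n) = ENNReal.ofReal pB)
    (hγ : ∀ n ≥ 1, γ n ∈ Set.Ioo (0:ℝ) 1)
    (hΓdiv : Filter.Tendsto (fun n => ∑ k ∈ Finset.Icc 1 n, γ k) atTop atTop)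
    (hsum : Summable (fun n : ℕ => ∏ k ∈ Finset.Icc 1 n, (1 - pB * γ k)))
    (hA : ∀ n ≥ 1, MeasurableSet (A n)) (hB : ∀ n ≥ 1, MeasurableSet (B n))
    (hU : ∀ n ≥ 1, Measurable (U n))
    (hUlaw : ∀ n ≥ 1, μ.map (U n) = volume.restrict (Set.Icc (0:ℝ) 1))
    (hiid : iIndepFun (m := fun _ : ℕ => (inferInstance : MeasurableSpace (ℝ × ℝ × ℝ)))
      (fun n ω => (U n ω, (A n).indicator (1 : Ω → ℝ) ω, (B n).indicator (1 : Ω → ℝ) ω)) μ)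
    (hident : ∀ n ≥ 1,
      IdentDistrib (fun ω => ((A n).indicator (1 : Ω → ℝ) ω, (B n).indicator (1 : Ω → ℝ) ω))
        (fun ω => ((A 1).indicator (1 : Ω → ℝ) ω, (B 1).indicator (1 : Ω → ℝ) ω)) μ μ)
    (hindep : IndepFun (fun ω (n : ℕ) => U n ω)
      (fun ω (n : ℕ) => ((A n).indicator (1 : Ω → ℝ) ω, (B n).indicator (1 : Ω → ℝ) ω)) μ)
    (X : ℕ → Ω → ℝ) (hX0 : ∀ ω, X 0 ω = x)
    (hrec : ∀ n ω, X (n + 1) ω = X n ω + γ (n + 1) *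
      ((1 - X n ω) * ({ω' | U (n + 1) ω' ≤ X n ω'} ∩ A (n + 1)).indicator (1 : Ω → ℝ) ω
        - X n ω * ({ω' | X n ω' < U (n + 1) ω'} ∩ B (n + 1)).indicator (1 : Ω → ℝ) ω)) :
    (0 < ∫ ω, (∏' n : ℕ,
        (1 - x * ∏ k ∈ Finset.Icc 1 n, (1 - (B k).indicator (1 : Ω → ℝ) ω * γ k))) ∂μ) ∧
      ENNReal.ofReal (∫ ω, (∏' n : ℕ,
        (1 - x * ∏ k ∈ Finset.Icc 1 n, (1 - (B k).indicator (1 : Ω → ℝ) ω * γ k))) ∂μ)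
        ≤ μ {ω | Filter.Tendsto (fun n => X n ω) atTop (nhds 0)} := by
  obtain ⟨hx0, hx1⟩ := hx
  -- basic indicator facts
  set e : ℕ → Ω → ℝ := fun k => (B k).indicator (1 : Ω → ℝ) with he
  have he01 : ∀ k ω, e k ω = 0 ∨ e k ω = 1 := by
    intro k ω
    by_cases h : ω ∈ B k <;> simp [he, Set.indicator_apply, h]
  -- the partial products of indicators
  set P : ℕ → Ω → ℝ := fun n ω => ∏ k ∈ Finset.Icc 1 n, (1 - e k ω * γ k) with hP
  set g : ℕ → Ω → ℝ := fun n ω => 1 - x * P n ω with hg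
  set Q : ℕ → Ω → ℝ := fun N ω => ∏ m ∈ Finset.range N, g m ω with hQ
  have hfac0 : ∀ k, 1 ≤ k → ∀ ω, 0 < 1 - e k ω * γ k := by
    intro k hk ω
    rcases he01 k ω with h | h <;> rw [h] <;> [simp; skip]
    · simp [(hγ k hk).2]
  have hfac1 : ∀ k, 1 ≤ k → ∀ ω, 1 - e k ω * γ k ≤ 1 := by
    intro k hk ω
    rcases he01 k ω with h | h <;> rw [h]
    · simp
    · nlinarith [(hγ k hk).1]
  have hP_pos : ∀ n ω, 0 < P n ω := fun n ω =>
    Finset.prod_pos fun k hk => hfac0 k (Finset.mem_Icc.mp hk).1 ω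
  have hP_le1 : ∀ n ω, P n ω ≤ 1 := fun n ω =>
    Finset.prod_le_one (fun k hk => (hfac0 k (Finset.mem_Icc.mp hk).1 ω).le)
      (fun k hk => hfac1 k (Finset.mem_Icc.mp hk).1 ω)
  have hxP0 : ∀ n ω, 0 ≤ x * P n ω := fun n ω => mul_nonneg hx0 (hP_pos n ω).le
  have hxP1 : ∀ n ω, x * P n ω ≤ x := fun n ω =>
    mul_le_of_le_one_right hx0 (hP_le1 n ω)
  have hg_pos : ∀ n ω, 0 < g n ω := fun n ω => by
    have := hxP1 n ω; simp only [hg]; linarith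
  have hg_le1 : ∀ n ω, g n ω ≤ 1 := fun n ω => by
    have := hxP0 n ω; simp only [hg]; linarith
  have hQ_nonneg : ∀ N ω, 0 ≤ Q N ω := fun N ω =>
    Finset.prod_nonneg fun m _ => (hg_pos m ω).le
  have hQ_le1 : ∀ N ω, Q N ω ≤ 1 := fun N ω =>
    Finset.prod_le_one (fun m _ => (hg_pos m ω).le) (fun m _ => hg_le1 m ω)
  have hHas : ∀ ω, HasProd (fun n => g n ω) (⨅ N, Q N ω) := fun ω =>
    aux_hasProd (fun n => (hg_pos n ω).le) (fun n => hg_le1 n ω)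
  set f : Ω → ℝ := fun ω => ∏' n, g n ω with hf
  have hfval : ∀ ω, f ω = ⨅ N, Q N ω := fun ω => (hHas ω).tprod_eq
  have htend : ∀ ω, Tendsto (fun N => Q N ω) atTop (𝓝 (f ω)) := fun ω => by
    rw [hfval ω]; exact (hHas ω).tendsto_prod_nat
  have hbddQ : ∀ ω, BddBelow (Set.range fun N => Q N ω) := fun ω =>
    ⟨0, by rintro y ⟨N, rfl⟩; exact hQ_nonneg N ω⟩
  have hf_le_Q : ∀ ω N, f ω ≤ Q N ω := fun ω N => by
    rw [hfval ω]; exact ciInf_le (hbddQ ω) N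
  have hf_nonneg : ∀ ω, 0 ≤ f ω := fun ω =>
    ge_of_tendsto (htend ω) (Filter.Eventually.of_forall fun N => hQ_nonneg N ω)
  -- measurability
  have he_meas : ∀ k, 1 ≤ k → Measurable (e k) := fun k hk =>
    measurable_one.indicator (hB k hk)
  have hP_meas : ∀ n, Measurable (P n) := by
    intro n
    apply Finset.measurable_prod
    intro k hk
    exact measurable_const.sub ((he_meas k (Finset.mem_Icc.mp hk).1).mul_const (γ k))
  have hg_meas : ∀ n, Measurable (g n) := fun n =>
    measurable_const.sub ((hP_meas n).const_mul x)
  have hQ_meas : ∀ N, Measurable (Q N) := fun N =>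
    Finset.measurable_prod _ fun m _ => hg_meas m
  have hf_meas : Measurable f :=
    measurable_of_tendsto_metrizable hQ_meas (tendsto_pi_nhds.2 htend)
  have hint : ∀ (h : Ω → ℝ), Measurable h → (∀ ω, 0 ≤ h ω) → (∀ ω, h ω ≤ 1) →
      Integrable h μ := by
    intro h hm h0 h1
    refine (integrable_const (1:ℝ)).mono' hm.aestronglyMeasurable ?_
    exact Filter.Eventually.of_forall fun ω => by
      rw [Real.norm_eq_abs, abs_of_nonneg (h0 ω)]; exact h1 ω
  have hf_int : Integrable f μ := hint f hf_meas hf_nonneg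
    (fun ω => (hf_le_Q ω 0).trans (by simp [hQ]))
  have hQ_int : ∀ N, Integrable (Q N) μ := fun N =>
    hint (Q N) (hQ_meas N) (fun ω => hQ_nonneg N ω) (fun ω => hQ_le1 N ω)
  have hP_int : ∀ n, Integrable (P n) μ := fun n =>
    hint (P n) (hP_meas n) (fun ω => (hP_pos n ω).le) (fun ω => hP_le1 n ω)
  have he_int : ∀ k, 1 ≤ k → Integrable (e k) μ := by
    intro k hk
    refine hint (e k) (he_meas k hk) (fun ω => ?_) (fun ω => ?_) <;>
      rcases he01 k ω with h | h <;> rw [h] <;> norm_num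
  -- modified iid family (measurable at every index)
  set T : ℕ → Ω → ℝ × ℝ × ℝ := fun n ω =>
    if n = 0 then (0, 0, 0) else (U n ω, (A n).indicator (1 : Ω → ℝ) ω, e n ω) with hT
  have hiid' : iIndepFun (m := fun _ : ℕ => (inferInstance : MeasurableSpace (ℝ × ℝ × ℝ))) T μ := by
    have h := hiid.comp (fun n (p : ℝ × ℝ × ℝ) => if n = 0 then ((0,0,0) : ℝ × ℝ × ℝ) else p)
      (fun n => by
        rcases eq_or_ne n 0 with rfl | h
        · simpa using measurable_const
        · simp only [h, ↓reduceIte]; exact measurable_id')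
    exact h
  have hT_meas : ∀ n, Measurable (T n) := by
    intro n
    rcases eq_or_ne n 0 with rfl | hn
    · simp only [hT, if_pos rfl]; exact measurable_const
    · have hn1 : 1 ≤ n := Nat.one_le_iff_ne_zero.mpr hn
      simp only [hT, if_neg hn]
      exact (hU n hn1).prodMk ((measurable_one.indicator (hA n hn1)).prodMk (he_meas n hn1))
  set b : ℕ → Ω → ℝ := fun k ω => (T k ω).2.2 with hb
  have hiidb : iIndepFun (m := fun _ : ℕ => (inferInstance : MeasurableSpace ℝ)) b μ :=
    hiid'.comp (fun _ p => p.2.2) (fun _ => measurable_snd.comp measurable_snd)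
  have hb_meas : ∀ k, Measurable (b k) := fun k =>
    (measurable_snd.comp measurable_snd).comp (hT_meas k)
  have hbe : ∀ k, 1 ≤ k → ∀ ω, b k ω = e k ω := by
    intro k hk ω
    simp only [hb, hT, if_neg (Nat.one_le_iff_ne_zero.mp hk)]
  have hpB1 : pB ≤ 1 := by
    have h := hpB 1 le_rfl
    have h2 : μ (B 1) ≤ 1 := prob_le_one
    rw [h] at h2
    exact ENNReal.ofReal_le_one.mp h2
  have he_integral : ∀ k, 1 ≤ k → ∫ ω, e k ω ∂μ = pB := by
    intro k hk
    have : ∫ ω, e k ω ∂μ = (μ (B k)).toReal • (1:ℝ) := by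
      simp only [he]
      exact integral_indicator_const (1:ℝ) (hB k hk)
    rw [this, hpB k hk, smul_eq_mul, mul_one, ENNReal.toReal_ofReal hpBpos.le]
  -- expectation of P n
  have EP : ∀ n, ∫ ω, P n ω ∂μ = ∏ k ∈ Finset.Icc 1 n, (1 - pB * γ k) := by
    intro n
    induction n with
    | zero => simp [hP]
    | succ n ih =>
      have hstep : ∀ ω, P (n+1) ω = P n ω * (1 - e (n+1) ω * γ (n+1)) := fun ω => by
        simp only [hP]; exact Finset.prod_Icc_succ_top (by omega) _
      have hdisj : Disjoint (Finset.Icc 1 n) ({n+1} : Finset ℕ) := by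
        simp [Finset.disjoint_singleton_right]
      have h1 := hiidb.indepFun_finset (Finset.Icc 1 n) {n+1} hdisj hb_meas
      have hφm : Measurable (fun p : ((Finset.Icc 1 n : Finset ℕ) : Type) → ℝ =>
          ∏ k ∈ (Finset.Icc 1 n).attach, (1 - p k * γ (k : ℕ))) :=
        Finset.measurable_prod _ fun k _ =>
          measurable_const.sub ((measurable_pi_apply k).mul_const _)
      have hψm : Measurable (fun p : (({n+1} : Finset ℕ) : Type) → ℝ =>
          1 - p ⟨n+1, Finset.mem_singleton_self _⟩ * γ (n+1)) :=
        measurable_const.sub ((measurable_pi_apply _).mul_const _)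
      have h2 := h1.comp hφm hψm
      have hIndep : IndepFun (P n) (fun ω => 1 - e (n+1) ω * γ (n+1)) μ := by
        have hl : ((fun p : ((Finset.Icc 1 n : Finset ℕ) : Type) → ℝ =>
            ∏ k ∈ (Finset.Icc 1 n).attach, (1 - p k * γ (k : ℕ))) ∘
            (fun ω (i : (Finset.Icc 1 n : Finset ℕ)) => b i ω)) = P n := by
          funext ω
          simp only [Function.comp_apply, hP]
          rw [← Finset.prod_attach (Finset.Icc 1 n) (fun k => 1 - e k ω * γ k)]
          exact Finset.prod_congr rfl fun k _ => by
            rw [hbe k (Finset.mem_Icc.mp k.2).1 ω]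
        have hr : ((fun p : (({n+1} : Finset ℕ) : Type) → ℝ =>
            1 - p ⟨n+1, Finset.mem_singleton_self _⟩ * γ (n+1)) ∘
            (fun ω (i : (({n+1} : Finset ℕ) : Type)) => b i ω)) =
            (fun ω => 1 - e (n+1) ω * γ (n+1)) := by
          funext ω
          simp only [Function.comp_apply]
          rw [hbe (n+1) (by omega) ω]
        rw [hl, hr] at h2
        exact h2
      have haux_int : Integrable (fun ω => 1 - e (n+1) ω * γ (n+1)) μ :=
        (integrable_const (1:ℝ)).sub ((he_int (n+1) (by omega)).mul_const _)
      calc ∫ ω, P (n+1) ω ∂μ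
          = ∫ ω, P n ω * (1 - e (n+1) ω * γ (n+1)) ∂μ := by
            exact integral_congr_ae (Filter.Eventually.of_forall fun ω => hstep ω)
        _ = (∫ ω, P n ω ∂μ) * ∫ ω, (1 - e (n+1) ω * γ (n+1)) ∂μ :=
            hIndep.integral_fun_mul_eq_mul_integral (hP_int n).aestronglyMeasurable
              haux_int.aestronglyMeasurable
        _ = (∏ k ∈ Finset.Icc 1 n, (1 - pB * γ k)) * (1 - pB * γ (n+1)) := by
            rw [ih]
            congr 1
            rw [integral_sub (integrable_const _) ((he_int (n+1) (by omega)).mul_const _),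
              integral_mul_const, he_integral (n+1) (by omega)]
            simp [mul_comm]
        _ = ∏ k ∈ Finset.Icc 1 (n+1), (1 - pB * γ k) :=
            (Finset.prod_Icc_succ_top (by omega) _).symm
  -- a.e. summability of the P n
  have hc_nonneg : ∀ n : ℕ, 0 ≤ ∏ k ∈ Finset.Icc 1 n, (1 - pB * γ k) := by
    intro n
    refine Finset.prod_nonneg fun k hk => ?_
    have hk1 := (Finset.mem_Icc.mp hk).1
    have := (hγ k hk1).1
    have := (hγ k hk1).2
    nlinarith
  have hsum_ae : ∀ᵐ ω ∂μ, Summable (fun n => P n ω) := by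
    have hmeas : Measurable (fun ω => ∑' n, ENNReal.ofReal (P n ω)) :=
      Measurable.ennreal_tsum fun n => (hP_meas n).ennreal_ofReal
    have hlt : ∫⁻ ω, (∑' n, ENNReal.ofReal (P n ω)) ∂μ ≠ ⊤ := by
      rw [lintegral_tsum fun n => ((hP_meas n).ennreal_ofReal).aemeasurable]
      have heach : ∀ n : ℕ, ∫⁻ ω, ENNReal.ofReal (P n ω) ∂μ =
          ENNReal.ofReal (∏ k ∈ Finset.Icc 1 n, (1 - pB * γ k)) := by
        intro n
        rw [← ofReal_integral_eq_lintegral_ofReal (hP_int n)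
          (Filter.Eventually.of_forall fun ω => (hP_pos n ω).le), EP n]
      simp only [heach]
      rw [← ENNReal.ofReal_tsum_of_nonneg hc_nonneg hsum]
      exact ENNReal.ofReal_ne_top
    filter_upwards [ae_lt_top hmeas hlt] with ω hω
    have hs := ENNReal.summable_toReal hω.ne
    have : (fun n => (ENNReal.ofReal (P n ω)).toReal) = fun n => P n ω := by
      funext n; exact ENNReal.toReal_ofReal (hP_pos n ω).le
    rwa [this] at hs
  -- a.e. positivity of f
  have hf_pos_ae : ∀ᵐ ω ∂μ, 0 < f ω := by
    filter_upwards [hsum_ae] with ω hω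
    have htot : Tendsto (fun M => ∑ m ∈ Finset.range M, P m ω) atTop
        (𝓝 (∑' m, P m ω)) := hω.hasSum.tendsto_sum_nat
    have hxpos : (0:ℝ) < 1 / (2 * (x + 1)) := by positivity
    obtain ⟨M, hM⟩ := (Filter.eventually_atTop.mp
      (htot.eventually (lt_mem_nhds (sub_lt_self (∑' m, P m ω) hxpos))))
    have hkey : ∀ N, M ≤ N → Q M ω * (1/2) ≤ Q N ω := by
      intro N hMN
      have hsplit : Q N ω = Q M ω * ∏ m ∈ Finset.Ico M N, g m ω := by
        simp only [hQ]
        rw [Finset.prod_range_mul_prod_Ico _ hMN]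
      have hIco : ∑ m ∈ Finset.Ico M N, x * P m ω ≤ 1/2 := by
        have h1 : ∑ m ∈ Finset.range N, P m ω ≤ ∑' m, P m ω :=
          Summable.sum_le_tsum _ (fun m _ => (hP_pos m ω).le) hω
        have h2 : ∑ m ∈ Finset.range M, P m ω + ∑ m ∈ Finset.Ico M N, P m ω
            = ∑ m ∈ Finset.range N, P m ω :=
          Finset.sum_range_add_sum_Ico _ hMN
        have h3 := hM M le_rfl
        have h4 : ∑ m ∈ Finset.Ico M N, P m ω ≤ 1 / (2 * (x + 1)) := by linarith
        rw [← Finset.mul_sum]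
        calc x * ∑ m ∈ Finset.Ico M N, P m ω ≤ x * (1 / (2 * (x+1))) := by
              refine mul_le_mul_of_nonneg_left h4 hx0
          _ ≤ 1/2 := by
              rw [mul_one_div, div_le_div_iff₀ (by positivity) (by norm_num)]
              linarith
      have hW : 1 - ∑ m ∈ Finset.Ico M N, x * P m ω ≤ ∏ m ∈ Finset.Ico M N, g m ω := by
        have := aux_weier (δ := fun m => x * P m ω) (s := Finset.Ico M N)
          (fun m _ => hxP0 m ω) (fun m _ => (hxP1 m ω).trans hx1.le)
        simpa only [hg] using this
      rw [hsplit]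
      have hQM : 0 ≤ Q M ω := hQ_nonneg M ω
      have : (1:ℝ)/2 ≤ ∏ m ∈ Finset.Ico M N, g m ω := by linarith
      nlinarith
    have hQMpos : 0 < Q M ω := Finset.prod_pos fun m _ => hg_pos m ω
    have : Q M ω * (1/2) ≤ f ω :=
      ge_of_tendsto (htend ω) (Filter.eventually_atTop.mpr ⟨M, fun N hN => hkey N hN⟩)
    linarith
  -- part 1
  have h1 : 0 < ∫ ω, f ω ∂μ := by
    rw [integral_pos_iff_support_of_nonneg hf_nonneg hf_int]
    by_contra hcon
    rw [not_lt, nonpos_iff_eq_zero] at hcon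
    have h0 : μ {ω | 0 < f ω} = 0 :=
      le_antisymm (le_trans (measure_mono fun ω h => ne_of_gt h) hcon.le) (by simp)
    have hneg : μ {ω | ¬ 0 < f ω} = 0 := ae_iff.mp hf_pos_ae
    have hcover : (univ : Set Ω) ⊆ {ω | 0 < f ω} ∪ {ω | ¬ 0 < f ω} := fun ω _ => by
      by_cases h : 0 < f ω
      exacts [Or.inl h, Or.inr h]
    have := (measure_mono hcover).trans (measure_union_le (μ := μ) {ω | 0 < f ω} {ω | ¬ 0 < f ω})
    rw [h0, hneg, add_zero, measure_univ] at this
    exact (by norm_num : ¬ ((1:ENNReal) ≤ 0)) this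
  -- Part 2
  set E : ℕ → Set Ω := fun n => {ω | x * P (n-1) ω < U n ω} with hE
  set D : ℕ → Set Ω := fun N => ⋂ n ∈ Finset.Icc 1 N, E n with hD
  have hE_meas : ∀ n, 1 ≤ n → MeasurableSet (E n) := fun n hn =>
    measurableSet_lt ((hP_meas (n-1)).const_mul x) (hU n hn)
  have hD_meas : ∀ N, MeasurableSet (D N) := fun N =>
    Finset.measurableSet_biInter _ fun n hn => hE_meas n (Finset.mem_Icc.mp hn).1
  have hD_anti : Antitone D := by
    intro M N hMN ω hω
    simp only [hD, Set.mem_iInter] at hω ⊢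
    intro n hn
    exact hω n (Finset.Icc_subset_Icc_right hMN hn)
  have hXP : ∀ ω, (∀ n, 1 ≤ n → ω ∈ E n) → ∀ n, X n ω = x * P n ω := by
    intro ω hω n
    induction n with
    | zero => simp [hX0, hP]
    | succ n ih =>
      have hU' : X n ω < U (n+1) ω := by
        have h := hω (n+1) (by omega)
        simp only [hE, Set.mem_setOf_eq, Nat.add_sub_cancel] at h
        rw [ih]; exact h
      have hind1 : ({ω' | U (n + 1) ω' ≤ X n ω'} ∩ A (n + 1)).indicator (1:Ω→ℝ) ω = 0 := by
        apply Set.indicator_of_notMem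
        rintro ⟨h1, -⟩
        exact absurd hU' (not_lt.mpr h1)
      have hind2 : ({ω' | X n ω' < U (n + 1) ω'} ∩ B (n + 1)).indicator (1:Ω→ℝ) ω
          = e (n+1) ω := by
        by_cases hBm : ω ∈ B (n+1)
        · rw [Set.indicator_of_mem (Set.mem_inter (show ω ∈ {ω' | X n ω' < U (n + 1) ω'} from hU') hBm)]
          simp [he, Set.indicator_of_mem hBm]
        · rw [Set.indicator_of_notMem (fun h => hBm h.2)]
          simp [he, Set.indicator_of_notMem hBm]
      have hPstep : P (n+1) ω = P n ω * (1 - e (n+1) ω * γ (n+1)) := by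
        simp only [hP]; exact Finset.prod_Icc_succ_top (by omega) _
      rw [hrec n ω, hind1, hind2, ih, hPstep]
      ring
  have hDinf : ∀ ω, ω ∈ (⋂ N, D N) ↔ (∀ n, 1 ≤ n → ω ∈ E n) := by
    intro ω
    simp only [Set.mem_iInter, hD]
    constructor
    · intro h n hn
      exact h n n (Finset.mem_Icc.mpr ⟨hn, le_refl n⟩)
    · intro h N n hn
      exact h n (Finset.mem_Icc.mp hn).1
  have hDsub : (⋂ N, D N) ∩ {ω | Summable fun n => P n ω} ⊆
      {ω | Tendsto (fun n => X n ω) atTop (𝓝 0)} := by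
    rintro ω ⟨hω1, hω2⟩
    have hXeq : ∀ n, X n ω = x * P n ω := hXP ω ((hDinf ω).mp hω1)
    have hP0 : Tendsto (fun n => P n ω) atTop (𝓝 0) := hω2.tendsto_atTop_zero
    have h2 : Tendsto (fun n => x * P n ω) atTop (𝓝 (x * 0)) := hP0.const_mul x
    rw [mul_zero] at h2
    exact h2.congr fun n => (hXeq n).symm
  -- reindex the partial products
  have hQIcc : ∀ N ω, Q N ω = ∏ n ∈ Finset.Icc 1 N, (1 - x * P (n-1) ω) := by
    intro N ω
    rw [aux_Icc_range (fun n => 1 - x * P (n-1) ω) N]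
    simp only [hQ, hg, Nat.add_sub_cancel]
  -- the key identity
  have hkey : ∀ N, μ (D N) = ENNReal.ofReal (∫ ω, Q N ω ∂μ) := by
    intro N
    set Bv : Ω → (ℕ → ℝ) := fun ω k => if k = 0 then 0 else e k ω with hBv
    set Uv : Ω → (ℕ → ℝ) := fun ω k => if k = 0 then 0 else U k ω with hUv
    have hBv_meas : Measurable Bv := measurable_pi_lambda _ fun k => by
      rcases eq_or_ne k 0 with rfl | h
      · simp only [hBv, if_pos rfl]; exact measurable_const
      · simp only [hBv, if_neg h]; exact he_meas k (Nat.one_le_iff_ne_zero.mpr h)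
    have hUv_meas : Measurable Uv := measurable_pi_lambda _ fun k => by
      rcases eq_or_ne k 0 with rfl | h
      · simp only [hUv, if_pos rfl]; exact measurable_const
      · simp only [hUv, if_neg h]; exact hU k (Nat.one_le_iff_ne_zero.mpr h)
    have hφmeas : Measurable (fun (w : ℕ → ℝ × ℝ) (k : ℕ) => if k = 0 then (0:ℝ) else (w k).2) := by
      refine measurable_pi_lambda _ fun k => ?_
      rcases eq_or_ne k 0 with rfl | h
      · simp only [if_pos rfl]; exact measurable_const
      · simp only [if_neg h]; exact (measurable_pi_apply k).snd
    have hψmeas : Measurable (fun (v : ℕ → ℝ) (k : ℕ) => if k = 0 then (0:ℝ) else v k) := by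
      refine measurable_pi_lambda _ fun k => ?_
      rcases eq_or_ne k 0 with rfl | h
      · simp only [if_pos rfl]; exact measurable_const
      · simp only [if_neg h]; exact measurable_pi_apply k
    have hBUindep : IndepFun Bv Uv μ := by
      have h := hindep.symm.comp hφmeas hψmeas
      exact h
    haveI : IsProbabilityMeasure (μ.map Bv) := Measure.isProbabilityMeasure_map hBv_meas.aemeasurable
    haveI : IsProbabilityMeasure (μ.map Uv) := Measure.isProbabilityMeasure_map hUv_meas.aemeasurable
    have hmap : μ.map (fun ω => (Bv ω, Uv ω)) = (μ.map Bv).prod (μ.map Uv) :=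
      (indepFun_iff_map_prod_eq_prod_map_map hBv_meas.aemeasurable
        hUv_meas.aemeasurable).mp hBUindep
    set t : ℕ → (ℕ → ℝ) → ℝ :=
      fun n w => x * ∏ k ∈ Finset.Icc 1 (n-1), (1 - w k * γ k) with ht
    have ht_meas : ∀ n, Measurable (t n) := fun n =>
      (Finset.measurable_prod _ fun k _ =>
        measurable_const.sub ((measurable_pi_apply k).mul_const _)).const_mul x
    set S : Set ((ℕ→ℝ) × (ℕ→ℝ)) :=
      ⋂ n ∈ Finset.Icc 1 N, {p : (ℕ→ℝ)×(ℕ→ℝ) | t n p.1 < p.2 n} with hS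
    have hS_meas : MeasurableSet S := Finset.measurableSet_biInter _ fun n hn =>
      measurableSet_lt ((ht_meas n).comp measurable_fst)
        ((measurable_pi_apply n).comp measurable_snd)
    have htB : ∀ n ω, t n (Bv ω) = x * P (n-1) ω := by
      intro n ω
      simp only [ht, hBv, hP]
      congr 1
      refine Finset.prod_congr rfl fun k hk => ?_
      rw [if_neg (by have := (Finset.mem_Icc.mp hk).1; omega)]
    have hpre : (fun ω => (Bv ω, Uv ω)) ⁻¹' S = D N := by
      ext ω
      simp only [hS, Set.mem_preimage, Set.mem_iInter, Set.mem_setOf_eq, hD, hE]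
      refine forall_congr' fun n => ?_
      refine forall_congr' fun hn => ?_
      have hn1 : 1 ≤ n := (Finset.mem_Icc.mp hn).1
      rw [htB n ω]
      simp only [hUv]
      rw [if_neg (by omega)]
    have hDN : μ (D N) = ((μ.map Bv).prod (μ.map Uv)) S := by
      rw [← hpre, ← hmap, Measure.map_apply (hBv_meas.prodMk hUv_meas) hS_meas]
    -- iid of the U coordinates
    have hiidu : iIndepFun (m := fun _ : ℕ => (inferInstance : MeasurableSpace ℝ))
        (fun n ω => (T n ω).1) μ :=
      hiid'.comp (fun _ p => p.1) (fun _ => measurable_fst)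
    have hu_eq : ∀ n, 1 ≤ n → (fun ω => (T n ω).1) = U n := by
      intro n hn
      funext ω
      simp only [hT, if_neg (by omega : ¬ n = 0)]
    have hUval : ∀ n, 1 ≤ n → ∀ τ : ℝ, 0 ≤ τ → τ ≤ x →
        μ (U n ⁻¹' Set.Ioi τ) = ENNReal.ofReal (1 - τ) := by
      intro n hn τ h0 h1
      rw [← Measure.map_apply (hU n hn) measurableSet_Ioi, hUlaw n hn,
        Measure.restrict_apply measurableSet_Ioi]
      have heq : Set.Ioi τ ∩ Set.Icc (0:ℝ) 1 = Set.Ioc τ 1 := by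
        ext y
        simp only [Set.mem_inter_iff, Set.mem_Ioi, Set.mem_Icc, Set.mem_Ioc]
        constructor
        · rintro ⟨h, _, h3⟩; exact ⟨h, h3⟩
        · rintro ⟨h, h3⟩; exact ⟨h, le_trans h0 h.le, h3⟩
      rw [heq, Real.volume_Ioc]
    -- a.e. the coordinates of Bv are 0 or 1
    have hGood_meas : MeasurableSet {w : ℕ → ℝ | ∀ k, w k = 0 ∨ w k = 1} := by
      have : {w : ℕ → ℝ | ∀ k, w k = 0 ∨ w k = 1} =
          ⋂ k, (fun w : ℕ → ℝ => w k) ⁻¹' ({0, 1} : Set ℝ) := by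
        ext w; simp [Set.mem_iInter]
      rw [this]
      exact MeasurableSet.iInter fun k =>
        (measurable_pi_apply k) (by exact (measurableSet_singleton 0).union (measurableSet_singleton 1))
    have hgood : ∀ᵐ w ∂(μ.map Bv), ∀ k, w k = 0 ∨ w k = 1 := by
      rw [ae_map_iff hBv_meas.aemeasurable hGood_meas]
      refine ae_of_all _ fun ω k => ?_
      simp only [hBv]
      rcases eq_or_ne k 0 with rfl | h
      · exact Or.inl (if_pos rfl)
      · rw [if_neg h]; exact he01 k ω
    have hslice_val : ∀ᵐ w ∂(μ.map Bv), (μ.map Uv) (Prod.mk w ⁻¹' S) =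
        ENNReal.ofReal (∏ n ∈ Finset.Icc 1 N, (1 - t n w)) := by
      filter_upwards [hgood] with w hw
      have htb : ∀ n, 0 ≤ t n w ∧ t n w ≤ x := by
        intro n
        have hfw : ∀ k ∈ Finset.Icc 1 (n-1), 0 ≤ 1 - w k * γ k ∧ 1 - w k * γ k ≤ 1 := by
          intro k hk
          have hk1 := (Finset.mem_Icc.mp hk).1
          rcases hw k with h | h <;> rw [h]
          · norm_num
          · have := (hγ k hk1).1
            have := (hγ k hk1).2
            constructor <;> nlinarith
        have h0 : 0 ≤ ∏ k ∈ Finset.Icc 1 (n-1), (1 - w k * γ k) :=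
          Finset.prod_nonneg fun k hk => (hfw k hk).1
        have h1 : ∏ k ∈ Finset.Icc 1 (n-1), (1 - w k * γ k) ≤ 1 :=
          Finset.prod_le_one (fun k hk => (hfw k hk).1) (fun k hk => (hfw k hk).2)
        exact ⟨mul_nonneg hx0 h0, mul_le_of_le_one_right hx0 h1⟩
      have hsl : Prod.mk w ⁻¹' S =
          ⋂ n ∈ Finset.Icc 1 N, (fun u : ℕ → ℝ => u n) ⁻¹' (Set.Ioi (t n w)) := by
        ext u
        simp [hS, Set.mem_iInter]
      rw [hsl]
      have hpi : Uv ⁻¹' (⋂ n ∈ Finset.Icc 1 N, (fun u : ℕ → ℝ => u n) ⁻¹' (Set.Ioi (t n w)))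
          = ⋂ n ∈ Finset.Icc 1 N, (fun ω => (T n ω).1) ⁻¹' (Set.Ioi (t n w)) := by
        simp only [Set.preimage_iInter]
        refine Set.iInter_congr fun n => ?_
        refine Set.iInter_congr fun hn => ?_
        have hn1 : 1 ≤ n := (Finset.mem_Icc.mp hn).1
        rw [hu_eq n hn1]
        ext ω
        simp only [Set.mem_preimage, Set.mem_Ioi, hUv]
        rw [if_neg (by omega)]
      rw [Measure.map_apply hUv_meas (Finset.measurableSet_biInter _
        (fun n _ => measurable_pi_apply n measurableSet_Ioi)), hpi,
        hiidu.measure_inter_preimage_eq_mul (Finset.Icc 1 N)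
          (sets := fun n => Set.Ioi (t n w)) (fun n _ => measurableSet_Ioi)]
      rw [ENNReal.ofReal_prod_of_nonneg (fun n hn => by linarith [(htb n).2, (htb n).1])]
      refine Finset.prod_congr rfl fun n hn => ?_
      have hn1 : 1 ≤ n := (Finset.mem_Icc.mp hn).1
      rw [hu_eq n hn1, hUval n hn1 (t n w) (htb n).1 (htb n).2]
    have hDN2 : μ (D N) = ∫⁻ w, ENNReal.ofReal
        (∏ n ∈ Finset.Icc 1 N, (1 - t n w)) ∂(μ.map Bv) := by
      rw [hDN, Measure.prod_apply hS_meas]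
      exact lintegral_congr_ae hslice_val
    have hDN3 : μ (D N) = ∫⁻ ω, ENNReal.ofReal (Q N ω) ∂μ := by
      rw [hDN2, lintegral_map (f := fun w => ENNReal.ofReal (∏ n ∈ Finset.Icc 1 N, (1 - t n w))) (Measurable.ennreal_ofReal (Finset.measurable_prod _
        fun n _ => measurable_const.sub (ht_meas n))) hBv_meas]
      refine lintegral_congr fun ω => ?_
      congr 1
      rw [hQIcc N ω]
      refine Finset.prod_congr rfl fun n hn => ?_
      rw [htB n ω]
    rw [hDN3, ← ofReal_integral_eq_lintegral_ofReal (hQ_int N)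
      (ae_of_all _ fun ω => hQ_nonneg N ω)]
  -- put it together
  have hμinter : μ (⋂ N, D N) = ⨅ N, μ (D N) :=
    Directed.measure_iInter (fun N => (hD_meas N).nullMeasurableSet)
      (hD_anti.directed_ge) ⟨0, measure_ne_top μ _⟩
  have hle : ENNReal.ofReal (∫ ω, f ω ∂μ) ≤ μ (⋂ N, D N) := by
    rw [hμinter]
    refine le_iInf fun N => ?_
    rw [hkey N]
    exact ENNReal.ofReal_le_ofReal (integral_mono hf_int (hQ_int N) fun ω => hf_le_Q ω N)
  refine ⟨h1, ?_⟩
  calc ENNReal.ofReal (∫ ω, f ω ∂μ) ≤ μ (⋂ N, D N) := hle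
    _ = μ ((⋂ N, D N) ∩ {ω | Summable fun n => P n ω}) := by
        refine (measure_inter_conull ?_).symm
        exact ae_iff.mp hsum_ae
    _ ≤ μ {ω | Tendsto (fun n => X n ω) atTop (𝓝 0)} := measure_mono hDsub
end

section
/- Pathwise comparison: let $(U_n),(V_n)$ be two independent i.i.d. uniform sequences, $x\le x'$ in $[0,1]$, $p_A\le p_A'$, and define the coupled algorithms $X_{n+1}=X_n+\gamma_{n+1}\big((1-X_n)\mathbf{1}_{\{U_{n+1}\le X_n,\,V_{n+1}\le p_A\}} - X_n\mathbf{1}_{\{U_{n+1}>X_n,\,V_{n+1}\le p_B\}}\big)$ from $X_0=x$, and $X_n'$ analogously with parameters $(p_B,p_A')$ from $X_0'=x'$. Then $X_n\le X_n'$ for every $n$, pathwise. -/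
set_option maxHeartbeats 1000000


open MeasureTheory ProbabilityTheory Filter Set

lemma step_ineq (g a b i1 i2 j1 j2 : ℝ) (hg : 0 < g) (hg1 : g < 1)
    (ha : 0 ≤ a) (ha1 : a ≤ 1) (hb : 0 ≤ b) (hb1 : b ≤ 1) (hab : a ≤ b)
    (hi1 : i1 = 0 ∨ i1 = 1) (hi2 : i2 = 0 ∨ i2 = 1)
    (hj1 : j1 = 0 ∨ j1 = 1) (hj2 : j2 = 0 ∨ j2 = 1)
    (h1j : i1 ≤ j1) (h2j : j2 ≤ i2) (hii : i1 * i2 = 0) (hjj : j1 * j2 = 0) :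
    0 ≤ a + g * ((1 - a) * i1 - a * i2) ∧ a + g * ((1 - a) * i1 - a * i2) ≤ 1 ∧
    0 ≤ b + g * ((1 - b) * j1 - b * j2) ∧ b + g * ((1 - b) * j1 - b * j2) ≤ 1 ∧
    a + g * ((1 - a) * i1 - a * i2) ≤ b + g * ((1 - b) * j1 - b * j2) := by
  rcases hi1 with h1 | h1 <;> rcases hi2 with h2 | h2 <;>
    rcases hj1 with h3 | h3 <;> rcases hj2 with h4 | h4 <;>
    subst h1 h2 h3 h4 <;>
    first
    | (exfalso; norm_num at hii hjj h1j h2j; done)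
    | (refine ⟨?_, ?_, ?_, ?_, ?_⟩ <;> ring_nf <;>
       nlinarith [mul_nonneg hg.le ha, mul_nonneg hg.le hb,
         mul_nonneg hg.le (sub_nonneg.2 ha1), mul_nonneg hg.le (sub_nonneg.2 hb1),
         mul_nonneg (sub_nonneg.2 hg1.le) (sub_nonneg.2 hab),
         mul_nonneg (sub_nonneg.2 hg1.le) ha, mul_nonneg (sub_nonneg.2 hg1.le) hb,
         mul_nonneg (sub_nonneg.2 hg1.le) (sub_nonneg.2 ha1),
         mul_nonneg (sub_nonneg.2 hg1.le) (sub_nonneg.2 hb1)])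

theorem stmt16 (Ω : Type*) [MeasurableSpace Ω] (μ : Measure Ω) [IsProbabilityMeasure μ]
    (U V : ℕ → Ω → ℝ) (γ : ℕ → ℝ) (x x' pA pA' pB : ℝ)
    (hx : x ∈ Set.Icc (0:ℝ) 1) (hx' : x' ∈ Set.Icc (0:ℝ) 1) (hxx' : x ≤ x')
    (hpA : pA ≤ pA')
    (hγ : ∀ n ≥ 1, γ n ∈ Set.Ioo (0:ℝ) 1)
    (hU : ∀ n ≥ 1, Measurable (U n)) (hV : ∀ n ≥ 1, Measurable (V n))
    (hUlaw : ∀ n ≥ 1, μ.map (U n) = volume.restrict (Set.Icc (0:ℝ) 1))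
    (hVlaw : ∀ n ≥ 1, μ.map (V n) = volume.restrict (Set.Icc (0:ℝ) 1))
    (hUiid : iIndepFun U μ)
    (hViid : iIndepFun V μ)
    (hUV : IndepFun (fun ω (n : ℕ) => U n ω) (fun ω (n : ℕ) => V n ω) μ)
    (X X' : ℕ → Ω → ℝ) (hX0 : ∀ ω, X 0 ω = x) (hX'0 : ∀ ω, X' 0 ω = x')
    (hrec : ∀ n ω, X (n + 1) ω = X n ω + γ (n + 1) *
      ((1 - X n ω) * ({ω' | U (n + 1) ω' ≤ X n ω' ∧ V (n + 1) ω' ≤ pA}).indicator (1 : Ω → ℝ) ω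
        - X n ω * ({ω' | X n ω' < U (n + 1) ω' ∧ V (n + 1) ω' ≤ pB}).indicator (1 : Ω → ℝ) ω))
    (hrec' : ∀ n ω, X' (n + 1) ω = X' n ω + γ (n + 1) *
      ((1 - X' n ω) * ({ω' | U (n + 1) ω' ≤ X' n ω' ∧ V (n + 1) ω' ≤ pA'}).indicator (1 : Ω → ℝ) ω
        - X' n ω * ({ω' | X' n ω' < U (n + 1) ω' ∧ V (n + 1) ω' ≤ pB}).indicator (1 : Ω → ℝ) ω)) :
    ∀ ω n, X n ω ≤ X' n ω := by
  have key : ∀ n ω, 0 ≤ X n ω ∧ X n ω ≤ 1 ∧ 0 ≤ X' n ω ∧ X' n ω ≤ 1 ∧ X n ω ≤ X' n ω := by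
    intro n
    induction n with
    | zero =>
      intro ω
      rw [hX0, hX'0]
      exact ⟨hx.1, hx.2, hx'.1, hx'.2, hxx'⟩
    | succ n ih =>
      intro ω
      obtain ⟨ha, ha1, hb, hb1, hab⟩ := ih ω
      obtain ⟨hg, hg1⟩ := hγ (n + 1) (by omega)
      rw [hrec n ω, hrec' n ω]
      simp only [Set.indicator_apply, Set.mem_setOf_eq, Pi.one_apply]
      set i1 : ℝ := if U (n+1) ω ≤ X n ω ∧ V (n+1) ω ≤ pA then 1 else 0 with hi1def
      set i2 : ℝ := if X n ω < U (n+1) ω ∧ V (n+1) ω ≤ pB then 1 else 0 with hi2def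
      set j1 : ℝ := if U (n+1) ω ≤ X' n ω ∧ V (n+1) ω ≤ pA' then 1 else 0 with hj1def
      set j2 : ℝ := if X' n ω < U (n+1) ω ∧ V (n+1) ω ≤ pB then 1 else 0 with hj2def
      have hi1 : i1 = 0 ∨ i1 = 1 := by rw [hi1def]; split_ifs <;> simp
      have hi2 : i2 = 0 ∨ i2 = 1 := by rw [hi2def]; split_ifs <;> simp
      have hj1 : j1 = 0 ∨ j1 = 1 := by rw [hj1def]; split_ifs <;> simp
      have hj2 : j2 = 0 ∨ j2 = 1 := by rw [hj2def]; split_ifs <;> simp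
      have h1j : i1 ≤ j1 := by
        rw [hi1def, hj1def]
        split_ifs with h h'
        · exact le_refl _
        · exact absurd ⟨h.1.trans hab, h.2.trans hpA⟩ h'
        · norm_num
        · exact le_refl _
      have h2j : j2 ≤ i2 := by
        rw [hi2def, hj2def]
        split_ifs with h h'
        · exact le_refl _
        · exact absurd ⟨lt_of_le_of_lt hab h.1, h.2⟩ h'
        · norm_num
        · exact le_refl _
      have hii : i1 * i2 = 0 := by
        rw [hi1def, hi2def]
        split_ifs with h h'
        · exact absurd h'.1 (not_lt.2 h.1)
        all_goals ring
      have hjj : j1 * j2 = 0 := by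
        rw [hj1def, hj2def]
        split_ifs with h h'
        · exact absurd h'.1 (not_lt.2 h.1)
        all_goals ring
      exact step_ineq (γ (n+1)) (X n ω) (X' n ω) i1 i2 j1 j2 hg hg1 ha ha1 hb hb1 hab
        hi1 hi2 hj1 hj2 h1j h2j hii hjj
  intro ω n
  exact (key n ω).2.2.2.2
end
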